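/- arXiv:1412.7020 — 10 statements merged into one kernel-verified Lean document; each statement's English description precedes it below -/
import Mathlib

section
/- Let D be a finite non-abelian p-group with D/⟨z⟩ abelian of rank 2 for some z ∈ Z(D). Then every p'-automorphism α of D centralizing z acts freely on D/⟨z⟩, i.e., the only coset of ⟨z⟩ fixed by the induced automorphism on D/⟨z⟩ is the trivial one, unless α = 1. -/
open commutatorElement

section CommAux
variable {G : Type*} [Group G]

lemma commAux_mul_right (hc : ∀ a b g : G, ⁅a,b⁆ * g = g * ⁅a,b⁆)
    (u v w : G) : ⁅u, v * w⁆ = ⁅u, v⁆ * ⁅u, w⁆ := by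
  have hCv : v⁻¹ * ⁅u, w⁆ = ⁅u, w⁆ * v⁻¹ := (hc u w v⁻¹).symm
  have h1 : ⁅u, v⁆ * ⁅u, w⁆ = u*v*u⁻¹*(v⁻¹ * ⁅u, w⁆) := by
    rw [commutatorElement_def u v]; group
  rw [h1, hCv, commutatorElement_def u w, commutatorElement_def u (v*w)]
  group

lemma commAux_inv_right (hc : ∀ a b g : G, ⁅a,b⁆ * g = g * ⁅a,b⁆)
    (u v : G) : ⁅u, v⁻¹⁆ = ⁅u, v⁆⁻¹ := by
  have h := commAux_mul_right hc u v v⁻¹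
  simp only [mul_inv_cancel, commutatorElement_one_right] at h
  exact (eq_inv_of_mul_eq_one_right h.symm)

lemma commAux_pow_right (hc : ∀ a b g : G, ⁅a,b⁆ * g = g * ⁅a,b⁆)
    (u v : G) (k : ℕ) : ⁅u, v ^ k⁆ = ⁅u, v⁆ ^ k := by
  induction k with
  | zero => simp
  | succ k ih => rw [pow_succ, commAux_mul_right hc, ih, pow_succ]

lemma commAux_zpow_right (hc : ∀ a b g : G, ⁅a,b⁆ * g = g * ⁅a,b⁆)
    (u v : G) (k : ℤ) : ⁅u, v ^ k⁆ = ⁅u, v⁆ ^ k := by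
  cases k with
  | ofNat k => simpa using commAux_pow_right hc u v k
  | negSucc k =>
      rw [zpow_negSucc, zpow_negSucc, commAux_inv_right hc, commAux_pow_right hc]

lemma commAux_swap (u v : G) : ⁅u, v⁆ = ⁅v, u⁆⁻¹ := by
  simp only [commutatorElement_def]; group

lemma commAux_mul_left (hc : ∀ a b g : G, ⁅a,b⁆ * g = g * ⁅a,b⁆)
    (u v w : G) : ⁅u * v, w⁆ = ⁅u, w⁆ * ⁅v, w⁆ := by
  rw [commAux_swap (u*v) w, commAux_mul_right hc, mul_inv_rev,
    ← commAux_swap v w, ← commAux_swap u w, hc]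

lemma commAux_zpow_left (hc : ∀ a b g : G, ⁅a,b⁆ * g = g * ⁅a,b⁆)
    (u v : G) (k : ℤ) : ⁅u ^ k, v⁆ = ⁅u, v⁆ ^ k := by
  rw [commAux_swap (u^k) v, commAux_zpow_right hc, ← inv_zpow, ← commAux_swap u v]

lemma commAux_list (hc : ∀ a b g : G, ⁅a,b⁆ * g = g * ⁅a,b⁆)
    (u : G) (l : List G) : ⁅u, l.prod⁆ = (l.map fun x => ⁅u, x⁆).prod := by
  induction l with
  | nil => simp
  | cons x l ih => rw [List.prod_cons, commAux_mul_right hc, List.map_cons, List.prod_cons, ih]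

end CommAux

lemma killP {G : Type*} [Group G] {p : ℕ} (hG : IsPGroup p G)
    {k : ℕ} (hk : Nat.Coprime k p) {x : G} (hx : x ^ k = 1) : x = 1 := by
  obtain ⟨j, hj⟩ := hG x
  have h1 : orderOf x ∣ k := orderOf_dvd_of_pow_eq_one hx
  have h2 : orderOf x ∣ p ^ j := orderOf_dvd_of_pow_eq_one hj
  have h3 : Nat.Coprime k (p ^ j) := hk.pow_right j
  have : orderOf x ∣ 1 := h3 ▸ Nat.dvd_gcd h1 h2
  exact orderOf_eq_one_iff.mp (Nat.dvd_one.mp this)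

lemma cyclicOfSmallTorsion {A : Type*} [CommGroup A] [Fintype A] {p : ℕ} (hp : p.Prime)
    (hA : IsPGroup p A) (h : Nat.card ((powMonoidHom p : A →* A).ker) ≤ p) :
    IsCyclic A := by
  classical
  have step : ∀ v : ℕ, Nat.card ((powMonoidHom (p^v) : A →* A).ker) ≤ p ^ v := by
    intro v
    induction v with
    | zero =>
        have hbot : ((powMonoidHom (p^0) : A →* A).ker) = ⊥ := by
          ext x; simp [MonoidHom.mem_ker, powMonoidHom_apply]
        rw [hbot]
        simp
    | succ v ih =>
        set Kv1 := ((powMonoidHom (p^(v+1)) : A →* A).ker) with hKv1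
        let F : Kv1 →* A := (powMonoidHom p).comp Kv1.subtype
        have hcard : Nat.card Kv1 = Nat.card (Kv1 ⧸ F.ker) * Nat.card F.ker :=
          Subgroup.card_eq_card_quotient_mul_card_subgroup F.ker
        have hquot : Nat.card (Kv1 ⧸ F.ker) = Nat.card F.range :=
          Nat.card_congr (QuotientGroup.quotientKerEquivRange F).toEquiv
        have hle : F.range ≤ ((powMonoidHom (p^v) : A →* A).ker) := by
          rintro x ⟨y, rfl⟩
          have hy : (y : A) ^ (p^(v+1)) = 1 := y.2
          simp only [MonoidHom.mem_ker, powMonoidHom_apply, F, MonoidHom.comp_apply,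
            Subgroup.coe_subtype]
          rw [← pow_mul, ← pow_succ']
          exact hy
        have hrange : Nat.card F.range ≤ Nat.card ((powMonoidHom (p^v) : A →* A).ker) :=
          Subgroup.card_le_of_le hle
        have hker : Nat.card F.ker ≤ Nat.card ((powMonoidHom p : A →* A).ker) := by
          apply Nat.card_le_card_of_injective
            (fun x => (⟨x.1.1, by
              have := x.2
              simp only [MonoidHom.mem_ker, F, MonoidHom.comp_apply, Subgroup.coe_subtype,
                powMonoidHom_apply] at this ⊢
              exact this⟩ : ((powMonoidHom p : A →* A).ker)))
          intro x y hxy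
          simp only [Subtype.mk.injEq] at hxy
          exact Subtype.ext (Subtype.ext hxy)
        calc Nat.card Kv1 = Nat.card (Kv1 ⧸ F.ker) * Nat.card F.ker := hcard
          _ ≤ Nat.card ((powMonoidHom (p^v) : A →* A).ker) * p := by
              apply Nat.mul_le_mul
              · rw [hquot]; exact hrange
              · exact le_trans hker h
          _ ≤ p ^ v * p := Nat.mul_le_mul_right _ ih
          _ = p ^ (v+1) := by rw [pow_succ]
  apply isCyclic_of_card_pow_eq_one_le
  intro n hn
  set v := n.factorization p with hv
  have hsub : (Finset.filter (fun a : A => a ^ n = 1) Finset.univ) ⊆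
      (Finset.filter (fun a : A => a ^ (p^v) = 1) Finset.univ) := by
    intro a ha
    simp only [Finset.mem_filter, Finset.mem_univ, true_and] at ha ⊢
    obtain ⟨j, hj⟩ := hA a
    obtain ⟨i, hi, hoi⟩ := (Nat.dvd_prime_pow hp).mp (orderOf_dvd_of_pow_eq_one hj)
    have hdvd : p ^ i ∣ n := hoi ▸ orderOf_dvd_of_pow_eq_one ha
    have hiv : i ≤ v := (Nat.Prime.pow_dvd_iff_le_factorization hp hn.ne').mp hdvd
    have : orderOf a ∣ p ^ v := hoi ▸ pow_dvd_pow p hiv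
    exact orderOf_dvd_iff_pow_eq_one.mp this
  have hcardv : (Finset.filter (fun a : A => a ^ (p^v) = 1) Finset.univ).card
      = Nat.card ((powMonoidHom (p^v) : A →* A).ker) := by
    rw [Nat.card_eq_fintype_card, ← Fintype.card_subtype]
    apply Fintype.card_congr
    exact (Equiv.subtypeEquivRight (fun x => by
      simp [MonoidHom.mem_ker, powMonoidHom_apply])).symm
  calc (Finset.filter (fun a : A => a ^ n = 1) Finset.univ).card
      ≤ (Finset.filter (fun a : A => a ^ (p^v) = 1) Finset.univ).card := Finset.card_le_card hsub
    _ = Nat.card ((powMonoidHom (p^v) : A →* A).ker) := hcardv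
    _ ≤ p ^ v := step v
    _ ≤ n := Nat.ordProj_le p hn.ne'

lemma listProd_range {M : Type*} [CommMonoid M] (f : ℕ → M) (n : ℕ) :
    ((List.range n).map f).prod = ∏ i ∈ Finset.range n, f i := by
  induction n with
  | zero => simp
  | succ n ih =>
      rw [List.range_succ, List.map_append, List.prod_append, Finset.prod_range_succ, ih]
      simp

set_option maxRecDepth 8000 in
set_option maxHeartbeats 1000000 in
/-- D a finite non-abelian p-group, z ∈ Z(D), D/⟨z⟩ abelian of rank 2.
Every nontrivial p'-automorphism α of D centralizing z acts freely on D/⟨z⟩: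
the only coset of ⟨z⟩ fixed by the induced map is the trivial one. -/
theorem stmt1 (p : ℕ) [Fact p.Prime] (D : Type*) [Group D] [Fintype D]
    (hp : IsPGroup p D) (hnab : ¬ ∀ a b : D, a * b = b * a)
    (z : D) (hz : z ∈ Subgroup.center D)
    [hN : (Subgroup.zpowers z).Normal]
    (hab : ∀ a b : D ⧸ Subgroup.zpowers z, a * b = b * a)
    (hrk : Group.rank (D ⧸ Subgroup.zpowers z) = 2)
    (α : D ≃* D) (hord : Nat.Coprime (orderOf α) p) (hαz : α z = z)
    (hα1 : α ≠ 1) :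
    ∀ w : D, α w * w⁻¹ ∈ Subgroup.zpowers z → w ∈ Subgroup.zpowers z := by
  classical
  set Z := Subgroup.zpowers z with hZdef
  set Q := D ⧸ Z with hQdef
  set q : D →* Q := QuotientGroup.mk' Z with hqdef
  have hpp : p.Prime := Fact.out
  -- Z is central
  have hZle : Z ≤ Subgroup.center D := Subgroup.zpowers_le.mpr hz
  have hZc : ∀ w ∈ Z, ∀ g : D, w * g = g * w := by
    intro w hw g
    exact (Subgroup.mem_center_iff.mp (hZle hw) g).symm
  -- α fixes Z pointwise
  have hαZ : ∀ w ∈ Z, α w = w := by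
    intro w hw
    obtain ⟨k, rfl⟩ := Subgroup.mem_zpowers_iff.mp hw
    rw [map_zpow, hαz]
  have hαiZ : ∀ (i : ℕ), ∀ w ∈ Z, (α ^ i) w = w := by
    intro i
    induction i with
    | zero => intro w hw; rfl
    | succ i ih =>
        intro w hw
        rw [pow_succ, MulAut.mul_apply, hαZ w hw]
        exact ih w hw
  -- all commutators are in Z, hence central
  have hccZ : ∀ a b : D, ⁅a, b⁆ ∈ Z := by
    intro a b
    rw [← QuotientGroup.eq_one_iff (N := Z)]
    show q ⁅a, b⁆ = 1
    rw [map_commutatorElement]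
    exact commutatorElement_eq_one_iff_mul_comm.mpr (hab _ _)
  have hc : ∀ a b g : D, ⁅a, b⁆ * g = g * ⁅a, b⁆ := fun a b g => hZc _ (hccZ a b) g
  -- order of α
  set n := orderOf α with hn
  have hn0 : n ≠ 0 := by
    intro h
    rw [h] at hord
    exact hpp.ne_one (Nat.coprime_zero_left p |>.mp hord)
  -- card of D
  have hDnt : Nontrivial D := by
    by_contra hs
    apply hnab
    intro a b
    rw [not_nontrivial_iff_subsingleton] at hs
    exact Subsingleton.elim _ _
  obtain ⟨m, hm⟩ := IsPGroup.iff_card.mp hp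
  rw [Nat.card_eq_fintype_card] at hm
  set N := Fintype.card D with hNdef
  have hN1 : 1 < N := Fintype.one_lt_card
  have hpN : p ∣ N := by
    rcases m with _ | m
    · rw [hm] at hN1; simp at hN1
    · rw [hm]; exact dvd_pow_self p (Nat.succ_ne_zero m)
  have killD : ∀ (k : ℕ), Nat.Coprime k p → ∀ x : D, x ^ k = 1 → x = 1 :=
    fun k hk x hx => killP hp hk hx
  -- inverse of n mod N
  have hcopN : Nat.Coprime n N := by rw [hm]; exact hord.pow_right m
  obtain ⟨n', hn'⟩ : ∃ n', n * n' % N = 1 :=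
    by obtain ⟨m, -, h⟩ := Nat.exists_mul_mod_eq_one_of_coprime hcopN hN1; exact ⟨m, h⟩
  obtain ⟨t, ht⟩ : ∃ t, n * n' = N * t + 1 := by
    refine ⟨n * n' / N, ?_⟩
    conv_lhs => rw [← Nat.div_add_mod (n * n') N]
    rw [hn']
  have hn'p : Nat.Coprime p n' := by
    rw [hpp.coprime_iff_not_dvd]
    intro hpn'
    have h1 : p ∣ n * n' := Dvd.dvd.mul_left hpn' n
    rw [ht] at h1
    have h2 : p ∣ N * t := Dvd.dvd.mul_right hpN t
    have : p ∣ 1 := (Nat.dvd_add_right h2).mp h1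
    exact hpp.ne_one (Nat.dvd_one.mp this)
  -- Step A: if α acts trivially on D/Z then α = 1
  have stepA : (∀ x : D, α x * x⁻¹ ∈ Z) → False := by
    intro h
    apply hα1
    apply MulEquiv.ext
    intro x
    show α x = x
    have hw : α x * x⁻¹ ∈ Z := h x
    set ζ := x⁻¹ * α x with hζ
    have hζval : ζ = α x * x⁻¹ := by
      have hcp : (α x * x⁻¹) * x⁻¹ = x⁻¹ * (α x * x⁻¹) := hZc _ hw x⁻¹
      calc ζ = x⁻¹ * (α x * x⁻¹) * x := by rw [hζ]; group
        _ = (α x * x⁻¹) * x⁻¹ * x := by rw [← hcp]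
        _ = α x * x⁻¹ := by group
    have hζZ : ζ ∈ Z := hζval ▸ hw
    have hαx : α x = x * ζ := by rw [hζ]; group
    have claim : ∀ i : ℕ, (α ^ i) x = x * ζ ^ i := by
      intro i
      induction i with
      | zero => simp
      | succ i ih =>
          rw [pow_succ', MulAut.mul_apply, ih, map_mul,
            hαZ _ (pow_mem hζZ i), hαx, mul_assoc, ← pow_succ']
    have hord1 : α ^ n = 1 := hn ▸ pow_orderOf_eq_one α
    have h1 : (α ^ n) x = x := by rw [hord1]; rfl
    have h3 : ζ ^ n = 1 := by
      have h2 : x * ζ ^ n = x * 1 := by rw [← claim n, h1, mul_one]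
      exact mul_left_cancel h2
    rw [hαx, killD n hord ζ h3, mul_one]
  -- now main argument
  intro w hw
  by_contra hwZ
  -- quotient group structure
  letI : CommGroup Q := CommGroup.mk hab
  haveI : Finite Q := Quotient.finite _
  letI : Fintype Q := Fintype.ofFinite Q
  have hQp : IsPGroup p Q := hp.to_quotient Z
  have hmapZ : Subgroup.map (α : D →* D) Z = Z := by
    have hcoe : ((α : D →* D) z) = z := hαz
    rw [hZdef, MonoidHom.map_zpowers, hcoe]
  set β := QuotientGroup.congr Z Z α hmapZ with hβdef
  have hβ : ∀ x : D, β (q x) = q (α x) := fun x => QuotientGroup.congr_mk' Z Z α hmapZ x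
  have hβi : ∀ (i : ℕ) (x : D), (β ^ i) (q x) = q ((α ^ i) x) := by
    intro i
    induction i with
    | zero => intro x; rfl
    | succ i ih =>
        intro x
        rw [pow_succ', MulAut.mul_apply, ih, hβ, pow_succ']
        rfl
  have hβn : ∀ y : Q, (β ^ n) y = y := by
    intro y
    obtain ⟨x, rfl⟩ := QuotientGroup.mk'_surjective Z y
    have hone : α ^ n = 1 := by rw [hn]; exact pow_orderOf_eq_one α
    rw [show ((QuotientGroup.mk' Z) x : Q) = q x from rfl, hβi n x, hone]
    rfl
  have hQN : ∀ x : Q, x ^ N = 1 := by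
    intro x
    have hdvd : Nat.card Q ∣ N := by
      rw [hNdef, ← Nat.card_eq_fintype_card,
        Subgroup.card_eq_card_quotient_mul_card_subgroup Z]
      exact Dvd.intro _ rfl
    obtain ⟨c, hcc⟩ := hdvd
    rw [hcc, pow_mul, pow_card_eq_one', one_pow]
  have killQ : ∀ (k : ℕ), Nat.Coprime k p → ∀ x : Q, x ^ k = 1 → x = 1 :=
    fun k hk x hx => killP hQp hk hx
  -- the trace and projection maps
  set T : Q →* Q := ∏ i ∈ Finset.range n, ((β ^ i : Q ≃* Q) : Q →* Q) with hTdef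
  have hT : ∀ x : Q, T x = ∏ i ∈ Finset.range n, (β ^ i) x := by
    intro x
    rw [hTdef, MonoidHom.finset_prod_apply]
    rfl
  set π : Q →* Q := (powMonoidHom n').comp T with hπdef
  have hπ : ∀ x : Q, π x = (T x) ^ n' := fun x => rfl
  have hβT : ∀ x : Q, β (T x) = T x := by
    intro x
    rw [hT, map_prod]
    have hre : ∀ i : ℕ, β ((β ^ i) x) = (β ^ (i+1)) x := by
      intro i; rw [pow_succ', MulAut.mul_apply]
    simp_rw [hre]
    have h1 := Finset.prod_range_succ (fun i => (β ^ i) x) n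
    have h2 := Finset.prod_range_succ' (fun i => (β ^ i) x) n
    rw [h1] at h2
    have h0 : (β ^ (0:ℕ)) x = x := rfl
    rw [hβn x, h0] at h2
    have h3 : (∏ i ∈ Finset.range n, (β ^ (i+1)) x) = ∏ i ∈ Finset.range n, (β ^ i) x :=
      (mul_right_cancel h2).symm
    rw [h3, ← hT]
  have hfixT : ∀ x : Q, β x = x → T x = x ^ n := by
    intro x hx
    have hfixi : ∀ i : ℕ, (β ^ i) x = x := by
      intro i
      induction i with
      | zero => rfl
      | succ i ih => rw [pow_succ', MulAut.mul_apply, ih, hx]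
    rw [hT]
    simp [hfixi]
  have hpowNN : ∀ x : Q, x ^ (n * n') = x := by
    intro x
    rw [ht, pow_succ, pow_mul, hQN x, one_pow, one_mul]
  have hπfixval : ∀ x : Q, β x = x → π x = x := by
    intro x hx
    rw [hπ, hfixT x hx, ← pow_mul]
    exact hpowNN x
  have hβπ : ∀ x : Q, β (π x) = π x := by
    intro x
    rw [hπ, map_pow, hβT]
  have hππ : ∀ x : Q, π (π x) = π x := fun x => hπfixval _ (hβπ x)
  have hZnormal : Z.Normal := inferInstance
  -- translate coset-fixedness
  have hfixq : ∀ x : D, α x * x⁻¹ ∈ Z → q (α x) = q x := by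
    intro x hx
    have h1 : x * (α x)⁻¹ ∈ Z := by
      have := inv_mem hx
      simpa [mul_inv_rev] using this
    have h3 := hZnormal.conj_mem _ h1 ((α x)⁻¹)
    have h4 : (α x)⁻¹ * (x * (α x)⁻¹) * ((α x)⁻¹)⁻¹ = (α x)⁻¹ * x := by group
    rw [h4] at h3
    exact QuotientGroup.eq.mpr h3
  have hqfix : ∀ x : D, q (α x) = q x → α x * x⁻¹ ∈ Z := by
    intro x hx
    have h1 : (α x)⁻¹ * x ∈ Z := QuotientGroup.eq.mp hx
    have h3 := hZnormal.conj_mem _ h1 (α x)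
    have h4 : α x * ((α x)⁻¹ * x) * (α x)⁻¹ = x * (α x)⁻¹ := by group
    rw [h4] at h3
    have := inv_mem h3
    simpa [mul_inv_rev] using this
  -- the fixed-point subgroup
  set Fix : Subgroup Q :=
    { carrier := {x : Q | β x = x}
      one_mem' := map_one β
      mul_mem' := by
        intro a b ha hb
        simp only [Set.mem_setOf_eq] at *
        rw [map_mul, ha, hb]
      inv_mem' := by
        intro a ha
        simp only [Set.mem_setOf_eq] at *
        rw [map_inv, ha] } with hFixdef
  have hmemFix : ∀ x : Q, x ∈ Fix ↔ β x = x := fun x => Iff.rfl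
  set K : Subgroup Q := π.ker with hKdef
  have hdisj : ∀ x : Q, x ∈ Fix → x ∈ K → x = 1 := by
    intro x hxF hxK
    have h1 := hπfixval x ((hmemFix x).mp hxF)
    rw [MonoidHom.mem_ker] at hxK
    rw [← h1, hxK]
  -- d := q w is a nontrivial fixed point
  have hd : q w ∈ Fix := by
    rw [hmemFix, hβ w]
    exact hfixq w hw
  have hd1 : q w ≠ 1 := by
    intro h
    exact hwZ ((QuotientGroup.eq_one_iff w).mp h)
  -- if β = 1 we are done by Step A; otherwise get a nontrivial element of K
  by_cases hall : ∀ x : D, α x * x⁻¹ ∈ Z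
  · exact stepA hall
  push_neg at hall
  obtain ⟨y, hy⟩ := hall
  set k0 : Q := (q y) * (π (q y))⁻¹ with hk0def
  have hk0K : k0 ∈ K := by
    rw [hKdef, MonoidHom.mem_ker, hk0def, map_mul, map_inv, hππ, mul_inv_cancel]
  have hk01 : k0 ≠ 1 := by
    intro h
    rw [hk0def, mul_inv_eq_one] at h
    have h2 : β (q y) = q y := by
      conv_lhs => rw [h]
      rw [hβπ, ← h]
    rw [hβ y] at h2
    exact hy (hqfix y h2)
  -- two generators of Q
  haveI : Group.FG Q := Group.fg_of_finite
  obtain ⟨S, hScard, hSgen⟩ := Group.rank_spec Q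
  rw [hrk] at hScard
  obtain ⟨a, b, hne, hSab⟩ := Finset.card_eq_two.mp hScard
  have hgen : ∀ x : Q, ∃ i j : ℤ, a ^ i * b ^ j = x := by
    intro x
    have hx : x ∈ Subgroup.closure ({a, b} : Set Q) := by
      rw [hSab] at hSgen
      have : (({a, b} : Finset Q) : Set Q) = ({a, b} : Set Q) := by
        rw [Finset.coe_insert, Finset.coe_singleton]
      rw [this] at hSgen
      rw [hSgen]
      trivial
    rw [show ({a, b} : Set Q) = {a} ∪ {b} from Set.insert_eq a ({b} : Set Q),
      Subgroup.closure_union] at hx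
    obtain ⟨u, hu, v, hv, huv⟩ := Subgroup.mem_sup.mp hx
    obtain ⟨i, hi⟩ := Subgroup.mem_closure_singleton.mp hu
    obtain ⟨j, hj⟩ := Subgroup.mem_closure_singleton.mp hv
    exact ⟨i, j, by rw [hi, hj, huv]⟩
  -- card of p-torsion is at most p^2
  have hQPle : Nat.card (Q ⧸ (powMonoidHom p : Q →* Q).range) ≤ p * p := by
    have hgp : ∀ g : Q, ((QuotientGroup.mk' (powMonoidHom p : Q →* Q).range) g) ^ (p:ℤ) = 1 := by
      intro g
      rw [zpow_natCast, ← map_pow, QuotientGroup.mk'_apply, QuotientGroup.eq_one_iff]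
      exact ⟨g, rfl⟩
    have hred : ∀ (g : Q ⧸ (powMonoidHom p : Q →* Q).range) (i : ℤ),
        g ^ (p:ℤ) = 1 → ∃ r : Fin p, g ^ i = g ^ (r : ℕ) := by
      intro g i hg
      have hp0 : 0 < (p:ℤ) := by exact_mod_cast hpp.pos
      have h1 : 0 ≤ i % p := Int.emod_nonneg i (by positivity)
      have h2 : i % p < p := Int.emod_lt_of_pos i hp0
      refine ⟨⟨(i % p).toNat, by omega⟩, ?_⟩
      have hsplit : i = (p:ℤ) * (i / p) + i % p := (Int.mul_ediv_add_emod i p).symm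
      calc g ^ i = g ^ ((p:ℤ) * (i/p)) * g ^ (i % p) := by rw [← zpow_add, ← hsplit]
        _ = (g ^ (p:ℤ)) ^ (i/p) * g ^ (i % p) := by rw [zpow_mul]
        _ = g ^ (i % p) := by rw [hg, one_zpow, one_mul]
        _ = g ^ (((i % p).toNat : ℤ)) := by rw [Int.toNat_of_nonneg h1]
        _ = g ^ ((i % p).toNat) := zpow_natCast g _
    have hsurj : Function.Surjective (fun ij : Fin p × Fin p =>
        ((QuotientGroup.mk' (powMonoidHom p : Q →* Q).range) a) ^ (ij.1 : ℕ) *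
          ((QuotientGroup.mk' (powMonoidHom p : Q →* Q).range) b) ^ (ij.2 : ℕ)) := by
      intro u
      obtain ⟨x, rfl⟩ := QuotientGroup.mk'_surjective _ u
      obtain ⟨i, j, hij⟩ := hgen x
      obtain ⟨r1, hr1⟩ := hred ((QuotientGroup.mk' _) a) i (hgp a)
      obtain ⟨r2, hr2⟩ := hred ((QuotientGroup.mk' _) b) j (hgp b)
      refine ⟨⟨r1, r2⟩, ?_⟩
      show ((QuotientGroup.mk' (powMonoidHom p : Q →* Q).range) a) ^ ((r1:ℕ)) *
          ((QuotientGroup.mk' (powMonoidHom p : Q →* Q).range) b) ^ ((r2:ℕ))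
          = (QuotientGroup.mk' (powMonoidHom p : Q →* Q).range) x
      rw [← hr1, ← hr2, ← map_zpow, ← map_zpow, ← map_mul, hij]
    have hcfin : Nat.card (Fin p × Fin p) = p * p := by
      rw [Nat.card_prod, Nat.card_eq_fintype_card, Fintype.card_fin]
    calc Nat.card (Q ⧸ (powMonoidHom p : Q →* Q).range) ≤ Nat.card (Fin p × Fin p) :=
          Nat.card_le_card_of_surjective _ hsurj
      _ = p * p := hcfin
  have hTorcard : Nat.card ((powMonoidHom p : Q →* Q).ker) ≤ p * p := by
    have h1 : Nat.card Q = Nat.card (Q ⧸ (powMonoidHom p : Q →* Q).range) *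
        Nat.card ((powMonoidHom p : Q →* Q).range) :=
      Subgroup.card_eq_card_quotient_mul_card_subgroup _
    have h2 : Nat.card Q = Nat.card (Q ⧸ (powMonoidHom p : Q →* Q).ker) *
        Nat.card ((powMonoidHom p : Q →* Q).ker) :=
      Subgroup.card_eq_card_quotient_mul_card_subgroup _
    have h3 : Nat.card (Q ⧸ (powMonoidHom p : Q →* Q).ker) =
        Nat.card ((powMonoidHom p : Q →* Q).range) :=
      Nat.card_congr (QuotientGroup.quotientKerEquivRange (powMonoidHom p : Q →* Q)).toEquiv
    have hPow0 : 0 < Nat.card ((powMonoidHom p : Q →* Q).range) := Nat.card_pos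
    have e1 : Nat.card ((powMonoidHom p : Q →* Q).range) *
        Nat.card (Q ⧸ (powMonoidHom p : Q →* Q).range) =
        Nat.card ((powMonoidHom p : Q →* Q).range) *
          Nat.card ((powMonoidHom p : Q →* Q).ker) := by
      rw [mul_comm (Nat.card ((powMonoidHom p : Q →* Q).range))
        (Nat.card (Q ⧸ (powMonoidHom p : Q →* Q).range)), ← h1, h2, h3]
    have e2 := Nat.eq_of_mul_eq_mul_left hPow0 e1
    rw [← e2]
    exact hQPle
  -- torsion sets
  set SQ : Set Q := {x : Q | x ^ p = 1} with hSQdef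
  have hSQcard : Nat.card SQ ≤ p * p := by
    have hset : SQ = (((powMonoidHom p : Q →* Q).ker : Subgroup Q) : Set Q) := by
      ext x
      simp only [hSQdef, Set.mem_setOf_eq, SetLike.mem_coe, MonoidHom.mem_ker,
        powMonoidHom_apply]
    rw [hset, SetLike.coe_sort_coe]
    exact hTorcard
  -- producing elements of order p
  have hordp : ∀ x : Q, x ≠ 1 → ∃ u : Q, u ∈ Subgroup.zpowers x ∧ u ^ p = 1 ∧ u ≠ 1 := by
    intro x hx
    obtain ⟨j, hj⟩ := hQp x
    have ho0 : orderOf x ≠ 0 := (orderOf_pos x).ne'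
    have ho1 : orderOf x ≠ 1 := by simpa [orderOf_eq_one_iff] using hx
    obtain ⟨i, hi, hoi⟩ := (Nat.dvd_prime_pow hpp).mp (orderOf_dvd_of_pow_eq_one hj)
    have hpo : p ∣ orderOf x := by
      rcases i with _ | i
      · rw [pow_zero] at hoi; exact absurd hoi ho1
      · rw [hoi]; exact dvd_pow_self p (Nat.succ_ne_zero i)
    refine ⟨x ^ (orderOf x / p), ?_, ?_, ?_⟩
    · exact Subgroup.mem_zpowers_iff.mpr ⟨(orderOf x / p : ℕ), by rw [zpow_natCast]⟩
    · rw [← pow_mul, Nat.div_mul_cancel hpo, pow_orderOf_eq_one]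
    · apply pow_ne_one_of_lt_orderOf
      · intro hzero
        rw [Nat.div_eq_zero_iff_lt (hpp.pos)] at hzero
        have hge : p ≤ orderOf x := Nat.le_of_dvd (Nat.pos_of_ne_zero ho0) hpo
        omega
      · exact Nat.div_lt_self (Nat.pos_of_ne_zero ho0) hpp.one_lt
  set SF : Set Q := {x : Q | x ∈ Fix ∧ x ^ p = 1} with hSFdef
  set SK : Set Q := {x : Q | x ∈ K ∧ x ^ p = 1} with hSKdef
  -- injective multiplication map
  have hcards : Nat.card SF * Nat.card SK ≤ p * p := by
    have hmulmem : ∀ (u : SF) (v : SK), (u : Q) * (v : Q) ∈ SQ := by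
      rintro ⟨u, hu, hup⟩ ⟨v, hv, hvp⟩
      show (u * v) ^ p = 1
      rw [mul_pow, hup, hvp, one_mul]
    have hinj : Function.Injective (fun uv : SF × SK =>
        (⟨(uv.1 : Q) * (uv.2 : Q), hmulmem uv.1 uv.2⟩ : SQ)) := by
      rintro ⟨⟨x, hxF, hxp⟩, ⟨y, hyK, hyp⟩⟩ ⟨⟨x', hxF', hxp'⟩, ⟨y', hyK', hyp'⟩⟩ h
      simp only [Subtype.mk.injEq] at h
      have key : x'⁻¹ * x = y' * y⁻¹ := by
        have h1 : x' * (y' * y⁻¹) * y = x' * y' := by group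
        rw [← h] at h1
        have h2 := mul_right_cancel h1
        rw [← h2]
        group
      have hmemF : x'⁻¹ * x ∈ Fix := mul_mem (inv_mem hxF') hxF
      have hmemK : x'⁻¹ * x ∈ K := by rw [key]; exact mul_mem hyK' (inv_mem hyK)
      have hone := hdisj _ hmemF hmemK
      have hxx' : x = x' := (inv_mul_eq_one.mp hone).symm
      have hyy' : y = y' := by
        have hk1 : y' * y⁻¹ = 1 := by rw [← key, hone]
        exact (mul_inv_eq_one.mp hk1).symm
      simp only [Prod.mk.injEq, Subtype.mk.injEq]
      exact ⟨hxx', hyy'⟩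
    calc Nat.card SF * Nat.card SK = Nat.card (SF × SK) := (Nat.card_prod _ _).symm
      _ ≤ Nat.card SQ := Nat.card_le_card_of_injective _ hinj
      _ ≤ p * p := hSQcard
  -- lower bounds for the torsion of Fix and K
  have hSFge : p ≤ Nat.card SF := by
    obtain ⟨u, huz, hup, hu1⟩ := hordp (q w) hd1
    have huF : u ∈ Fix := (Subgroup.zpowers_le.mpr hd) huz
    have hsub : ((Subgroup.zpowers u : Subgroup Q) : Set Q) ⊆ SF := by
      intro x hx
      obtain ⟨k, hk⟩ := Subgroup.mem_zpowers_iff.mp hx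
      refine ⟨hk ▸ zpow_mem huF k, ?_⟩
      have hcompow : (u ^ k) ^ p = (u ^ p) ^ k := by
        rw [← zpow_natCast (u ^ k) p, ← zpow_mul, mul_comm, zpow_mul, zpow_natCast]
      rw [← hk, hcompow, hup, one_zpow]
    have hmono := Nat.card_mono (Set.toFinite SF) hsub
    rwa [SetLike.coe_sort_coe, Nat.card_zpowers, orderOf_eq_prime hup hu1] at hmono
  have hSKge : p ≤ Nat.card SK := by
    obtain ⟨u, huz, hup, hu1⟩ := hordp k0 hk01
    have huK : u ∈ K := (Subgroup.zpowers_le.mpr hk0K) huz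
    have hsub : ((Subgroup.zpowers u : Subgroup Q) : Set Q) ⊆ SK := by
      intro x hx
      obtain ⟨k, hk⟩ := Subgroup.mem_zpowers_iff.mp hx
      refine ⟨hk ▸ zpow_mem huK k, ?_⟩
      have hcompow : (u ^ k) ^ p = (u ^ p) ^ k := by
        rw [← zpow_natCast (u ^ k) p, ← zpow_mul, mul_comm, zpow_mul, zpow_natCast]
      rw [← hk, hcompow, hup, one_zpow]
    have hmono := Nat.card_mono (Set.toFinite SK) hsub
    rwa [SetLike.coe_sort_coe, Nat.card_zpowers, orderOf_eq_prime hup hu1] at hmono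
  have hSKle : Nat.card SK ≤ p := by
    have h1 : p * Nat.card SK ≤ p * p := le_trans (Nat.mul_le_mul_right _ hSFge) hcards
    exact Nat.le_of_mul_le_mul_left h1 hpp.pos
  have hSFle : Nat.card SF ≤ p := by
    have h1 : Nat.card SF * p ≤ p * p :=
      le_trans (Nat.mul_le_mul_left _ hSKge) hcards
    exact Nat.le_of_mul_le_mul_right h1 hpp.pos
  -- Fix and K are cyclic
  haveI : Fintype ↥Fix := Fintype.ofFinite _
  haveI : Fintype ↥K := Fintype.ofFinite _
  have hmem2F : ∀ x : ((powMonoidHom p : ↥Fix →* ↥Fix).ker), ((x : ↥Fix) : Q) ∈ SF := by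
    intro x
    refine ⟨(x : ↥Fix).2, ?_⟩
    have hx := x.2
    rw [MonoidHom.mem_ker, powMonoidHom_apply] at hx
    calc ((x : ↥Fix) : Q) ^ p = (((x : ↥Fix) ^ p : ↥Fix) : Q) := by norm_cast
      _ = ((1 : ↥Fix) : Q) := by rw [hx]
      _ = 1 := rfl
  have hinjF : Function.Injective (fun x : ((powMonoidHom p : ↥Fix →* ↥Fix).ker) =>
      (⟨((x : ↥Fix) : Q), hmem2F x⟩ : SF)) := by
    intro x y hxy
    simp only [Subtype.mk.injEq] at hxy
    exact Subtype.ext (Subtype.ext hxy)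
  haveI hcyF : IsCyclic ↥Fix :=
    cyclicOfSmallTorsion hpp (hQp.to_subgroup Fix)
      (le_trans (Nat.card_le_card_of_injective _ hinjF) hSFle)
  have hmem2K : ∀ x : ((powMonoidHom p : ↥K →* ↥K).ker), ((x : ↥K) : Q) ∈ SK := by
    intro x
    refine ⟨(x : ↥K).2, ?_⟩
    have hx := x.2
    rw [MonoidHom.mem_ker, powMonoidHom_apply] at hx
    calc ((x : ↥K) : Q) ^ p = (((x : ↥K) ^ p : ↥K) : Q) := by norm_cast
      _ = ((1 : ↥K) : Q) := by rw [hx]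
      _ = 1 := rfl
  have hinjK : Function.Injective (fun x : ((powMonoidHom p : ↥K →* ↥K).ker) =>
      (⟨((x : ↥K) : Q), hmem2K x⟩ : SK)) := by
    intro x y hxy
    simp only [Subtype.mk.injEq] at hxy
    exact Subtype.ext (Subtype.ext hxy)
  haveI hcyK : IsCyclic ↥K :=
    cyclicOfSmallTorsion hpp (hQp.to_subgroup K)
      (le_trans (Nat.card_le_card_of_injective _ hinjK) hSKle)
  obtain ⟨gF, hgF⟩ := hcyF.exists_generator
  obtain ⟨gK, hgK⟩ := hcyK.exists_generator
  have hFgen : ∀ x : Q, x ∈ Fix → ∃ i : ℤ, ((gF : Q)) ^ i = x := by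
    intro x hx
    obtain ⟨i, hi⟩ := Subgroup.mem_zpowers_iff.mp (hgF ⟨x, hx⟩)
    refine ⟨i, ?_⟩
    have hcoe : ((gF ^ i : ↥Fix) : Q) = x := congrArg Subtype.val hi
    rw [← hcoe]
    norm_cast
  have hKgen : ∀ x : Q, x ∈ K → ∃ i : ℤ, ((gK : Q)) ^ i = x := by
    intro x hx
    obtain ⟨i, hi⟩ := Subgroup.mem_zpowers_iff.mp (hgK ⟨x, hx⟩)
    refine ⟨i, ?_⟩
    have hcoe : ((gK ^ i : ↥K) : Q) = x := congrArg Subtype.val hi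
    rw [← hcoe]
    norm_cast
  -- well-definedness of commutators modulo Z
  have hWDl : ∀ u u' v : D, q u = q u' → ⁅u, v⁆ = ⁅u', v⁆ := by
    intro u u' v huu
    have hs : u⁻¹ * u' ∈ Z := QuotientGroup.eq.mp huu
    have hu' : u' = u * (u⁻¹ * u') := by group
    rw [hu', commAux_mul_left hc,
      commutatorElement_eq_one_iff_mul_comm.mpr (hZc _ hs v), mul_one]
  have hWDr : ∀ u v v' : D, q v = q v' → ⁅u, v⁆ = ⁅u, v'⁆ := by
    intro u v v' hvv
    have hs : v⁻¹ * v' ∈ Z := QuotientGroup.eq.mp hvv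
    have hv' : v' = v * (v⁻¹ * v') := by group
    rw [hv', commAux_mul_right hc,
      commutatorElement_eq_one_iff_mul_comm.mpr (hZc _ hs u).symm, mul_one]
  -- representatives for the generators of Fix and K
  obtain ⟨F, hF⟩ := QuotientGroup.mk'_surjective Z ((gF : Q))
  obtain ⟨E, hE⟩ := QuotientGroup.mk'_surjective Z ((gK : Q))
  have hF' : q F = (gF : Q) := hF
  have hE' : q E = (gK : Q) := hE
  have hβF : β (q F) = q F := by
    rw [hF']
    exact gF.2
  have hβiF : ∀ i : ℕ, (β ^ i) (q F) = q F := by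
    intro i
    induction i with
    | zero => rfl
    | succ i ih => rw [pow_succ', MulAut.mul_apply, ih, hβF]
  have hπE : π (q E) = 1 := by
    rw [hE']
    exact gK.2
  -- the crucial commutator vanishing
  have hfe : ⁅F, E⁆ = 1 := by
    set l : List D := (List.range n).map (fun i => (α ^ i) E) with hldef
    have hqprod : q l.prod = T (q E) := by
      rw [map_list_prod, hldef, List.map_map]
      have hmapeq : (q ∘ fun i => (α ^ i) E) = fun i => (β ^ i) (q E) := by
        funext i
        exact (hβi i E).symm
      rw [hmapeq, listProd_range (fun i => (β ^ i) (q E)) n, hT]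
    have hcomm_i : ∀ i : ℕ, ⁅F, (α ^ i) E⁆ = ⁅F, E⁆ := by
      intro i
      have hq1 : q ((α ^ i) F) = q F := by rw [← hβi i F, hβiF i]
      calc ⁅F, (α ^ i) E⁆ = ⁅(α ^ i) F, (α ^ i) E⁆ := (hWDl _ _ _ hq1).symm
        _ = (α ^ i) ⁅F, E⁆ := (map_commutatorElement (α ^ i : D ≃* D) F E).symm
        _ = ⁅F, E⁆ := hαiZ i _ (hccZ F E)
    have hFW : ⁅F, l.prod⁆ = ⁅F, E⁆ ^ n := by
      rw [commAux_list hc, hldef, List.map_map]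
      have hmapeq : ((fun x => ⁅F, x⁆) ∘ fun i => (α ^ i) E) = fun _ => ⁅F, E⁆ := by
        funext i
        exact hcomm_i i
      rw [hmapeq]
      have hrepl : (List.range n).map (fun _ => ⁅F, E⁆) = List.replicate n ⁅F, E⁆ := by
        rw [List.eq_replicate_iff]
        constructor
        · rw [List.length_map, List.length_range]
        · intro x hx
          obtain ⟨i, _, hix⟩ := List.mem_map.mp hx
          exact hix.symm
      rw [hrepl, List.prod_replicate]
    have hTE1 : T (q E) = 1 := by
      have h1 : (T (q E)) ^ n' = 1 := by rw [← hπ, hπE]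
      exact killQ n' hn'p.symm _ h1
    have hlZ : l.prod ∈ Z := by
      rw [← QuotientGroup.eq_one_iff (N := Z)]
      show q l.prod = 1
      rw [hqprod, hTE1]
    have hFl : ⁅F, l.prod⁆ = 1 :=
      commutatorElement_eq_one_iff_mul_comm.mpr (hZc _ hlZ F).symm
    have hn1 : ⁅F, E⁆ ^ n = 1 := by rw [← hFW, hFl]
    exact killD n hord _ hn1
  -- decomposition of arbitrary elements
  have hdecomp : ∀ u : D, ∃ i j : ℤ, q u = (q F) ^ i * (q E) ^ j := by
    intro u
    have h1 : π (q u) ∈ Fix := (hmemFix _).mpr (hβπ (q u))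
    obtain ⟨i, hi⟩ := hFgen _ h1
    have h2 : (π (q u))⁻¹ * q u ∈ K := by
      rw [hKdef, MonoidHom.mem_ker, map_mul, map_inv, hππ, inv_mul_cancel]
    obtain ⟨j, hj⟩ := hKgen _ h2
    refine ⟨i, j, ?_⟩
    calc q u = π (q u) * ((π (q u))⁻¹ * q u) := by group
      _ = (q F) ^ i * (q E) ^ j := by rw [hF', hE', hi, hj]
  -- conclude: D would be abelian
  apply hnab
  intro u v
  obtain ⟨i1, j1, h1⟩ := hdecomp u
  obtain ⟨i2, j2, h2⟩ := hdecomp v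
  have hqu : q u = q (F ^ i1 * E ^ j1) := by
    rw [map_mul, map_zpow, map_zpow, h1]
  have hqv : q v = q (F ^ i2 * E ^ j2) := by
    rw [map_mul, map_zpow, map_zpow, h2]
  have hFF : ⁅F, F⁆ = 1 := commutatorElement_eq_one_iff_mul_comm.mpr rfl
  have hEE : ⁅E, E⁆ = 1 := commutatorElement_eq_one_iff_mul_comm.mpr rfl
  have hEF : ⁅E, F⁆ = 1 := by rw [commAux_swap, hfe, inv_one]
  have hcommuv : ⁅u, v⁆ = 1 := by
    rw [hWDl _ _ _ hqu, hWDr _ _ _ hqv]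
    simp only [commAux_mul_left hc, commAux_mul_right hc, commAux_zpow_left hc,
      commAux_zpow_right hc, hFF, hEE, hfe, hEF, one_zpow, mul_one, one_mul]
  exact commutatorElement_eq_one_iff_mul_comm.mp hcommuv
end

section
/- Let D be a finite minimal non-abelian group (all proper subgroups are abelian but D is non-abelian). Then the Frattini subgroup Φ(D) is contained in the center Z(D). -/
/-- In a finite minimal non-abelian group the Frattini subgroup
is contained in the center. -/
theorem stmt2 (D : Type*) [Group D] [Fintype D]
    (hnab : ¬ ∀ a b : D, a * b = b * a)
    (hmin : ∀ H : Subgroup D, H ≠ ⊤ → ∀ a ∈ H, ∀ b ∈ H, a * b = b * a) :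
    frattini D ≤ Subgroup.center D := by
  intro x hx
  rw [Subgroup.mem_center_iff]
  intro b
  rcases eq_top_or_exists_le_coatom (Subgroup.zpowers b) with h | ⟨M, hM, hbM⟩
  · exact absurd (fun a c => by
      have ha : a ∈ Subgroup.zpowers b := h ▸ Subgroup.mem_top a
      have hc : c ∈ Subgroup.zpowers b := h ▸ Subgroup.mem_top c
      obtain ⟨m, rfl⟩ := ha
      obtain ⟨n, rfl⟩ := hc
      exact (zpow_mul_comm b m n)) hnab
  · exact hmin M hM.1 b (hbM (Subgroup.mem_zpowers b)) x (frattini_le_coatom hM hx)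
end

section
/- Let P be a homocyclic abelian p-group of exponent p² (a direct product of isomorphic cyclic groups of order p²), and let A be a p'-group of automorphisms of P. Then P with its A-action is A-equivariantly isomorphic (as an A-set, via a bijection commuting with the action) to Ω(P) × Ω(P) with the componentwise A-action. -/
private lemma zmod_pmul_mod (p : ℕ) [Fact p.Prime] (v : ZMod (p ^ 2)) :
    (p : ZMod (p ^ 2)) * ((v.val % p : ℕ) : ZMod (p ^ 2)) = (p : ZMod (p ^ 2)) * v := by
  haveI : NeZero (p ^ 2) := ⟨pow_ne_zero 2 (Fact.out : p.Prime).ne_zero⟩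
  have h0 : v.val % p + p * (v.val / p) = v.val := Nat.mod_add_div _ _
  have h1 : ((v.val % p : ℕ) : ZMod (p ^ 2)) + (p : ZMod (p ^ 2)) * ((v.val / p : ℕ) : ZMod (p ^ 2)) = v := by
    have := congrArg (fun m : ℕ => (m : ZMod (p ^ 2))) h0
    push_cast at this
    rw [this, ZMod.natCast_val, ZMod.cast_id]
  have hpp : (p : ZMod (p ^ 2)) * (p : ZMod (p ^ 2)) = 0 := by
    rw [← Nat.cast_mul, ← pow_two, ZMod.natCast_self]
  conv_rhs => rw [← h1]
  rw [mul_add, ← mul_assoc, hpp, zero_mul, add_zero]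

private lemma zmod_pmul_inj (p : ℕ) [Fact p.Prime] (v w : ZMod (p ^ 2))
    (h : (p : ZMod (p ^ 2)) * v = (p : ZMod (p ^ 2)) * w) : v.val % p = w.val % p := by
  haveI : NeZero (p ^ 2) := ⟨pow_ne_zero 2 (Fact.out : p.Prime).ne_zero⟩
  have h2 : ((p * v.val : ℕ) : ZMod (p ^ 2)) = ((p * w.val : ℕ) : ZMod (p ^ 2)) := by
    push_cast
    rw [ZMod.natCast_val, ZMod.cast_id, ZMod.natCast_val, ZMod.cast_id, h]
  have h3 : p * v.val ≡ p * w.val [MOD p * p] := by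
    rw [show p * p = p ^ 2 from (pow_two p).symm]
    exact (ZMod.natCast_eq_natCast_iff _ _ _).mp h2
  exact Nat.ModEq.mul_left_cancel' (Fact.out : p.Prime).ne_zero h3

private lemma zmod_pmul_zero (p : ℕ) [Fact p.Prime] (v : ZMod (p ^ 2))
    (h : (p : ZMod (p ^ 2)) * v = 0) : ∃ c : ZMod (p ^ 2), v = (p : ZMod (p ^ 2)) * c := by
  haveI : NeZero (p ^ 2) := ⟨pow_ne_zero 2 (Fact.out : p.Prime).ne_zero⟩
  have hp : p.Prime := Fact.out
  have h2 : ((p * v.val : ℕ) : ZMod (p ^ 2)) = ((0 : ℕ) : ZMod (p ^ 2)) := by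
    push_cast
    rw [ZMod.natCast_val, ZMod.cast_id, h]
  have h3 : p ^ 2 ∣ p * v.val := by
    have h4 := (ZMod.natCast_eq_natCast_iff _ _ _).mp h2
    have h5 : p * v.val % p ^ 2 = 0 := by simpa [Nat.ModEq] using h4
    exact Nat.dvd_of_mod_eq_zero h5
  obtain ⟨c, hc⟩ := h3
  have hcv : v.val = p * c := Nat.eq_of_mul_eq_mul_left hp.pos (by rw [hc]; ring)
  refine ⟨(c : ZMod (p ^ 2)), ?_⟩
  have hv : v = ((v.val : ℕ) : ZMod (p ^ 2)) := by rw [ZMod.natCast_val, ZMod.cast_id]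
  rw [hv, hcv]
  push_cast
  ring

/-- If P is a homocyclic abelian p-group of exponent p² and A is a
p'-group of automorphisms, then P is A-equivariantly bijective to Ω(P) × Ω(P)
with the componentwise action. -/
theorem stmt6 (p : ℕ) [Fact p.Prime] (P : Type*) [CommGroup P] [Fintype P]
    (hhomo : ∃ r : ℕ, Nonempty (P ≃* (Fin r → Multiplicative (ZMod (p ^ 2)))))
    (A : Subgroup (MulAut P)) (hA : Nat.Coprime (Nat.card A) p) :
    ∃ φ : P ≃ {x : P // x ^ p = 1} × {x : P // x ^ p = 1},
      ∀ a ∈ A, ∀ x : P,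
        ((φ (a x)).1 : P) = a ((φ x).1 : P) ∧ ((φ (a x)).2 : P) = a ((φ x).2 : P) := by
  classical
  obtain ⟨r, ⟨e⟩⟩ := hhomo
  have hp : p.Prime := Fact.out
  haveI : NeZero (p ^ 2) := ⟨pow_ne_zero 2 hp.ne_zero⟩
  -- exponent p²
  have F1 : ∀ x : P, x ^ (p ^ 2) = 1 := by
    intro x
    apply e.injective
    rw [map_pow, map_one]
    funext i
    show (e x i) ^ (p ^ 2) = 1
    apply Multiplicative.toAdd.injective
    rw [toAdd_pow, toAdd_one, nsmul_eq_mul, ZMod.natCast_self, zero_mul]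
  -- p-th roots for Ω
  have F2 : ∀ u : P, u ^ p = 1 → ∃ y : P, y ^ p = u := by
    intro u hu
    have hcomp : ∀ i, (p : ZMod (p ^ 2)) * Multiplicative.toAdd (e u i) = 0 := by
      intro i
      have h1 : e (u ^ p) i = e 1 i := by rw [hu]
      rw [map_pow, map_one] at h1
      have h2 : (e u i) ^ p = 1 := h1
      have h3 := congrArg Multiplicative.toAdd h2
      rwa [toAdd_pow, toAdd_one, nsmul_eq_mul] at h3
    choose c hc using fun i => zmod_pmul_zero p _ (hcomp i)
    refine ⟨e.symm fun i => Multiplicative.ofAdd (c i), ?_⟩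
    apply e.injective
    rw [map_pow, e.apply_symm_apply]
    funext i
    show (Multiplicative.ofAdd (c i)) ^ p = e u i
    apply Multiplicative.toAdd.injective
    rw [toAdd_pow, toAdd_ofAdd, nsmul_eq_mul, ← hc i]
  -- the reduction map t
  set t : P → P := fun x =>
    e.symm fun i => Multiplicative.ofAdd
      (((Multiplicative.toAdd (e x i)).val % p : ℕ) : ZMod (p ^ 2)) with ht
  have T1 : ∀ x : P, t x ^ p = x ^ p := by
    intro x
    apply e.injective
    rw [map_pow, map_pow, ht, e.apply_symm_apply]
    funext i
    show (Multiplicative.ofAdd _) ^ p = (e x i) ^ p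
    apply Multiplicative.toAdd.injective
    rw [toAdd_pow, toAdd_pow, toAdd_ofAdd, nsmul_eq_mul, nsmul_eq_mul]
    exact zmod_pmul_mod p _
  have T2 : ∀ x y : P, x ^ p = y ^ p → t x = t y := by
    intro x y hxy
    show e.symm _ = e.symm _
    congr 1
    funext i
    have h1 : e (x ^ p) i = e (y ^ p) i := by rw [hxy]
    rw [map_pow, map_pow] at h1
    have h2 : (e x i) ^ p = (e y i) ^ p := h1
    have h3 := congrArg Multiplicative.toAdd h2
    rw [toAdd_pow, toAdd_pow, nsmul_eq_mul, nsmul_eq_mul] at h3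
    rw [zmod_pmul_inj p _ _ h3]
  -- inverse of |A| mod p²
  haveI : Fintype A := Fintype.ofFinite A
  set n : ℕ := Nat.card A with hn
  have hcop : Nat.Coprime n (p ^ 2) := hA.pow_right 2
  set u : (ZMod (p ^ 2))ˣ := ZMod.unitOfCoprime n hcop with hu
  set k : ℕ := ((u⁻¹ : (ZMod (p ^ 2))ˣ) : ZMod (p ^ 2)).val with hk
  have hnk : ∀ x : P, x ^ (p ^ 2) = 1 → x ^ (n * k) = x := by
    intro x hx
    have hcast : ((n * k : ℕ) : ZMod (p ^ 2)) = ((1 : ℕ) : ZMod (p ^ 2)) := by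
      push_cast
      rw [hk, ZMod.natCast_val, ZMod.cast_id]
      have h4 : (n : ZMod (p ^ 2)) = (u : ZMod (p ^ 2)) := (ZMod.coe_unitOfCoprime n hcop).symm
      rw [h4, ← Units.val_mul, mul_inv_cancel, Units.val_one]
    have hm : n * k ≡ 1 [MOD p ^ 2] := (ZMod.natCast_eq_natCast_iff _ _ _).mp hcast
    have h1 : 1 < p ^ 2 := by have := hp.two_le; nlinarith
    calc x ^ (n * k) = x ^ ((n * k) % p ^ 2) := pow_eq_pow_mod _ hx
      _ = x ^ (1 % p ^ 2) := by rw [hm]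
      _ = x := by rw [Nat.mod_eq_of_lt h1, pow_one]
  -- the averaged section S
  set S : P → P :=
    fun x => (∏ a : A, (a : MulAut P) (t (((a⁻¹ : A) : MulAut P) x))) ^ k with hS
  have S1 : ∀ x : P, S x ^ p = x ^ p := by
    intro x
    rw [hS]
    simp only
    rw [← pow_mul, mul_comm k p, pow_mul, ← Finset.prod_pow]
    have hterm : ∀ a : A, ((a : MulAut P) (t (((a⁻¹ : A) : MulAut P) x))) ^ p = x ^ p := by
      intro a
      rw [← map_pow, T1, ← map_pow]
      simp
    rw [Finset.prod_congr rfl fun a _ => hterm a, Finset.prod_const, Finset.card_univ]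
    have hxp : (x ^ p) ^ (p ^ 2) = 1 := by
      rw [← pow_mul, mul_comm, pow_mul, F1, one_pow]
    rw [← pow_mul, ← Nat.card_eq_fintype_card]
    exact hnk _ hxp
  have S2 : ∀ b : A, ∀ x : P, S ((b : MulAut P) x) = (b : MulAut P) (S x) := by
    intro b x
    rw [hS]
    simp only
    rw [map_pow]
    congr 1
    rw [map_prod]
    rw [show (∏ a : A, (a : MulAut P) (t (((a⁻¹ : A) : MulAut P) ((b : MulAut P) x))))
        = ∏ c : A, ((b * c : A) : MulAut P) (t ((((b * c)⁻¹ : A) : MulAut P) ((b : MulAut P) x)))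
      from (Equiv.prod_comp (Equiv.mulLeft b)
        (fun a : A => (a : MulAut P) (t (((a⁻¹ : A) : MulAut P) ((b : MulAut P) x))))).symm]
    apply Finset.prod_congr rfl
    intro c _
    have h1 : (((b * c)⁻¹ : A) : MulAut P) ((b : MulAut P) x) = ((c⁻¹ : A) : MulAut P) x := by
      rw [mul_inv_rev]
      simp [MulAut.mul_apply]
    rw [h1]
    simp [MulAut.mul_apply]
  have S3 : ∀ x y : P, x ^ p = y ^ p → S x = S y := by
    intro x y hxy
    rw [hS]
    simp only
    congr 1
    apply Finset.prod_congr rfl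
    intro a _
    congr 1
    apply T2
    rw [← map_pow, ← map_pow, hxy]
  -- assemble the bijection
  have hball : ∀ x : P, (x ^ p) ^ p = 1 := by
    intro x
    rw [← pow_mul, ← pow_two]
    exact F1 x
  have hmem2 : ∀ x : P, ((S x)⁻¹ * x) ^ p = 1 := by
    intro x
    rw [mul_pow, inv_pow, S1, inv_mul_cancel]
  set ych : {x : P // x ^ p = 1} → P := fun u => Classical.choose (F2 u.1 u.2) with hych
  have hy : ∀ u : {x : P // x ^ p = 1}, (ych u) ^ p = u.1 :=
    fun u => Classical.choose_spec (F2 u.1 u.2)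
  refine ⟨{ toFun := fun x => (⟨x ^ p, hball x⟩, ⟨(S x)⁻¹ * x, hmem2 x⟩),
            invFun := fun uw => S (ych uw.1) * uw.2.1,
            left_inv := ?_, right_inv := ?_ }, ?_⟩
  · intro x
    simp only
    have h1 : S (ych ⟨x ^ p, hball x⟩) = S x := S3 _ _ (by rw [hy])
    rw [h1, mul_inv_cancel_left]
  · rintro ⟨u, w⟩
    have hxp : (S (ych u) * w.1) ^ p = u.1 := by
      rw [mul_pow, S1, hy, w.2, mul_one]
    have hSS : S (S (ych u) * w.1) = S (ych u) := S3 _ _ (by rw [hxp, ← hy u])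
    refine Prod.ext (Subtype.ext ?_) (Subtype.ext ?_)
    · exact hxp
    · show (S (S (ych u) * w.1))⁻¹ * (S (ych u) * w.1) = w.1
      rw [hSS, inv_mul_cancel_left]
  · intro a ha x
    refine ⟨?_, ?_⟩
    · show (a x) ^ p = a (x ^ p)
      rw [map_pow]
    · show (S (a x))⁻¹ * (a x) = a ((S x)⁻¹ * x)
      have h1 : S (a x) = a (S x) := S2 ⟨a, ha⟩ x
      rw [h1, map_mul, map_inv]
end

section
/- Let A be a finite group acting on a finite group P such that P decomposes as an internal direct product P = P₁ × ⋯ × Pₙ of A-invariant subgroups. If for each i there exists xᵢ ∈ Pᵢ with C_A(xᵢ) = C_A(Pᵢ), then for x = x₁⋯xₙ one has C_A(x) = C_A(P₁) ∩ ⋯ ∩ C_A(Pₙ) = C_A(P). -/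
/-- If a finite group A acts on a finite group P which is an internal
direct product of A-invariant subgroups P₁, …, Pₙ, and xᵢ ∈ Pᵢ satisfies
C_A(xᵢ) = C_A(Pᵢ) for each i, then for x = x₁⋯xₙ we have
C_A(x) = C_A(P₁) ∩ ⋯ ∩ C_A(Pₙ) = C_A(P). -/
theorem stmt7 (A P : Type*) [Group A] [Group P] [Fintype A] [Fintype P]
    [MulDistribMulAction A P]
    (n : ℕ) (Psub : Fin n → Subgroup P)
    (hinv : ∀ i, ∀ a : A, ∀ q ∈ Psub i, a • q ∈ Psub i)
    (hcomm : ∀ i j, i ≠ j → ∀ q ∈ Psub i, ∀ r ∈ Psub j, Commute q r)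
    (hind : iSupIndep Psub)
    (hsup : ⨆ i, Psub i = ⊤)
    (x : Fin n → P) (hx : ∀ i, x i ∈ Psub i)
    (hxc : ∀ i j, i ≠ j → Commute (x i) (x j))
    (hreg : ∀ i, ∀ a : A, (a • x i = x i) ↔ (∀ q ∈ Psub i, a • q = q)) :
    ∀ a : A,
      ((a • Finset.univ.noncommProd x (fun i _ j _ h => hxc i j h) =
          Finset.univ.noncommProd x (fun i _ j _ h => hxc i j h)) ↔
        (∀ q : P, a • q = q)) ∧
      ((∀ i, ∀ q ∈ Psub i, a • q = q) ↔ (∀ q : P, a • q = q)) := by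
  intro a
  -- the second equivalence
  have key : (∀ i, ∀ q ∈ Psub i, a • q = q) → (∀ q : P, a • q = q) := by
    intro h q
    let F : Subgroup P :=
      { carrier := {q | a • q = q}
        one_mem' := smul_one a
        mul_mem' := by
          intro u v hu hv
          simp only [Set.mem_setOf_eq] at *
          rw [smul_mul', hu, hv]
        inv_mem' := by
          intro u hu
          simp only [Set.mem_setOf_eq] at *
          rw [smul_inv', hu] }
    have hle : ∀ i, Psub i ≤ F := fun i q hq => h i q hq
    have : (⊤ : Subgroup P) ≤ F := hsup ▸ iSup_le hle
    exact this (Subgroup.mem_top q)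
  have second : (∀ i, ∀ q ∈ Psub i, a • q = q) ↔ (∀ q : P, a • q = q) :=
    ⟨key, fun h i q _ => h q⟩
  refine ⟨?_, second⟩
  constructor
  · intro hfix
    refine key ?_
    intro i
    rw [← hreg i a]
    -- use injectivity of the product map
    have pair : Pairwise fun i j : Fin n => ∀ q r : P,
        q ∈ Psub i → r ∈ Psub j → Commute q r :=
      fun i j h q r hq hr => hcomm i j h q hq r hr
    have hinj := Subgroup.injective_noncommPiCoprod_of_iSupIndep (hcomm := pair) hind
    set u : ∀ i, Psub i := fun i => ⟨a • x i, hinv i a _ (hx i)⟩ with hu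
    set v : ∀ i, Psub i := fun i => ⟨x i, hx i⟩ with hv
    have h1 : Subgroup.noncommPiCoprod pair u = Subgroup.noncommPiCoprod pair v := by
      rw [Subgroup.noncommPiCoprod_apply, Subgroup.noncommPiCoprod_apply]
      have hmap := Finset.map_noncommProd Finset.univ x
          (fun i _ j _ h => hxc i j h) (MulDistribMulAction.toMonoidHom P a)
      have : (Finset.univ.noncommProd (fun i => (u i : P))
          (fun i _ j _ h => pair h _ _ (u i).2 (u j).2)) =
          a • Finset.univ.noncommProd x (fun i _ j _ h => hxc i j h) := by
        rw [show (a • Finset.univ.noncommProd x (fun i _ j _ h => hxc i j h)) =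
            MulDistribMulAction.toMonoidHom P a
              (Finset.univ.noncommProd x (fun i _ j _ h => hxc i j h)) from rfl, hmap]
        rfl
      rw [this, hfix]
    have := congrFun (hinj h1) i
    exact congrArg Subtype.val this
  · intro h
    have : ∀ q : P, a • q = q := h
    calc a • Finset.univ.noncommProd x (fun i _ j _ h => hxc i j h)
        = Finset.univ.noncommProd x (fun i _ j _ h => hxc i j h) := this _
end

section
/- Let M = (1 + δ_{ij})_{i,j=1}^3. Then for every nonzero x = (x₁, x₂, x₃) ∈ ℤ⁹ with xᵢ ∈ ℤ³, one has 16·x (M ⊗ M)⁻¹ xᵀ = Σᵢ 4 xᵢ M⁻¹ xᵢᵀ + Σ_{i<j} 4 (xᵢ−xⱼ) M⁻¹ (xᵢ−xⱼ)ᵀ ≥ 9. Hence the minimum of the quadratic form 16·x(M⊗M)⁻¹xᵀ over nonzero integer vectors is 9. -/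
open Kronecker

/-- The 3×3 integer matrix with 2's on the diagonal and 1's elsewhere. -/
def Mz9 : Matrix (Fin 3) (Fin 3) ℤ := Matrix.of fun i j => if i = j then 2 else 1

/-- Its rational version. -/
noncomputable def Mq9 : Matrix (Fin 3) (Fin 3) ℚ := Mz9.map Int.cast

/-- The quadratic form y ↦ 4·y M⁻¹ yᵀ on rational vectors of length 3. -/
noncomputable def q39 (y : Fin 3 → ℚ) : ℚ := 4 * dotProduct y (Mq9⁻¹.mulVec y)

/-- The quadratic form x ↦ 16·x (M ⊗ M)⁻¹ xᵀ on rational vectors of length 9. -/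
noncomputable def q99 (x : Fin 3 × Fin 3 → ℚ) : ℚ :=
  16 * dotProduct x ((Mq9 ⊗ₖ Mq9)⁻¹.mulVec x)

/-- The i-th block (of length 3) of an integer vector of length 9, as rationals. -/
def blk9 (x : Fin 3 × Fin 3 → ℤ) (i : Fin 3) : Fin 3 → ℚ := fun j => (x (i, j) : ℚ)

noncomputable def Nq : Matrix (Fin 3) (Fin 3) ℚ := Matrix.of fun i j => if i = j then 3/4 else -(1/4)

lemma hMN : Mq9 * Nq = 1 := by
  ext i j
  fin_cases i <;> fin_cases j <;>
    simp [Mq9, Mz9, Nq, Matrix.mul_apply, Fin.sum_univ_three] <;> norm_num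

lemma Minv : Mq9⁻¹ = Nq := Matrix.inv_eq_right_inv hMN

lemma Kinv : (Mq9 ⊗ₖ Mq9)⁻¹ = Nq ⊗ₖ Nq := by
  apply Matrix.inv_eq_right_inv
  rw [← Matrix.mul_kronecker_mul, hMN, Matrix.one_kronecker_one]

lemma q39_eq (y : Fin 3 → ℚ) :
    q39 y = 4*((y 0)^2+(y 1)^2+(y 2)^2) - (y 0 + y 1 + y 2)^2 := by
  rw [q39, Minv]
  simp [Nq, dotProduct, Matrix.mulVec, Fin.sum_univ_three]
  ring

lemma q99_eq (x : Fin 3 × Fin 3 → ℚ) :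
    q99 x = 16 * ∑ i : Fin 3, ∑ j : Fin 3, x (i,j) *
      ∑ k : Fin 3, ∑ l : Fin 3, (Nq i k * Nq j l) * x (k,l) := by
  rw [q99, Kinv]
  simp [dotProduct, Matrix.mulVec, Fintype.sum_prod_type, Matrix.kroneckerMap_apply]

lemma q39_nonneg (y : Fin 3 → ℚ) : 0 ≤ q39 y := by
  rw [q39_eq]
  nlinarith [sq_nonneg (y 0 - y 1), sq_nonneg (y 1 - y 2), sq_nonneg (y 0 - y 2),
    sq_nonneg (y 0), sq_nonneg (y 1), sq_nonneg (y 2)]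

lemma sq1 (n : ℤ) (h : n ≠ 0) : 1 ≤ n^2 := by
  have := Int.one_le_abs (by simpa using h)
  nlinarith [sq_abs n]

lemma keyZ (a b c : ℤ) (h : ¬(a = 0 ∧ b = 0 ∧ c = 0)) :
    3 ≤ 4*(a^2+b^2+c^2) - (a+b+c)^2 := by
  by_cases hab : a = b
  · by_cases hbc : b = c
    · subst hab; subst hbc
      have ha : a ≠ 0 := by tauto
      nlinarith [sq1 a ha]
    · -- b ≠ c
      have h1 := sq1 _ (sub_ne_zero.mpr hbc)
      by_cases hac : a = c
      · subst hac
        nlinarith [sq_nonneg (2*a - b), sq_nonneg b, sq_nonneg a]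
      · have h2 := sq1 _ (sub_ne_zero.mpr hac)
        nlinarith [sq_nonneg a, sq_nonneg b, sq_nonneg c, sq_nonneg (a-b),
          sq1 _ (sub_ne_zero.mpr hbc), sq1 _ (sub_ne_zero.mpr hac)]
  · have h1 := sq1 _ (sub_ne_zero.mpr hab)
    by_cases hac : a = c
    · have hbc : b ≠ c := fun h' => hab (hac.trans h'.symm)
      nlinarith [sq1 _ (sub_ne_zero.mpr hbc), sq_nonneg a, sq_nonneg b, sq_nonneg c,
        sq_nonneg (b-c)]
    · nlinarith [sq1 _ (sub_ne_zero.mpr hac), sq_nonneg a, sq_nonneg b, sq_nonneg c,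
        sq_nonneg (b-c)]

lemma q39_lb (y : Fin 3 → ℤ) (hy : y ≠ 0) : 3 ≤ q39 (fun j => (y j : ℚ)) := by
  rw [q39_eq]
  have h : ¬(y 0 = 0 ∧ y 1 = 0 ∧ y 2 = 0) := by
    rintro ⟨h0, h1, h2⟩
    apply hy
    funext j
    fin_cases j <;> assumption
  have := keyZ (y 0) (y 1) (y 2) h
  have : (3 : ℚ) ≤ ((4*((y 0)^2+(y 1)^2+(y 2)^2) - (y 0 + y 1 + y 2)^2 : ℤ) : ℚ) := by
    exact_mod_cast this
  push_cast at this
  linarith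

lemma blk_cast (x : Fin 3 × Fin 3 → ℤ) (i : Fin 3) :
    blk9 x i = fun j => ((fun k => x (i, k)) j : ℚ) := rfl

lemma blk_sub_cast (x : Fin 3 × Fin 3 → ℤ) (i j : Fin 3) :
    blk9 x i - blk9 x j = fun k => ((fun l => x (i, l) - x (j, l)) k : ℚ) := by
  funext k; simp [blk9]

lemma main_id (x : Fin 3 × Fin 3 → ℤ) :
    q99 (fun ij => (x ij : ℚ)) =
      (∑ i : Fin 3, q39 (blk9 x i)) +
        ∑ i : Fin 3, ∑ j : Fin 3, (if i < j then q39 (blk9 x i - blk9 x j) else 0) := by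
  rw [q99_eq]
  simp only [Fin.sum_univ_three, q39_eq, Pi.sub_apply, blk9]
  norm_num [Nq, show ((0:Fin 3) < 1) from by decide,
    show ((0:Fin 3) < 2) from by decide, show ((1:Fin 3) < 2) from by decide,
    show ¬((1:Fin 3) < 0) from by decide, show ¬((2:Fin 3) < 0) from by decide,
    show ¬((2:Fin 3) < 1) from by decide, show ¬((0:Fin 3) < 0) from by decide,
    show ¬((1:Fin 3) < 1) from by decide, show ¬((2:Fin 3) < 2) from by decide]
  push_cast
  ring

/-- For every nonzero x ∈ ℤ⁹ written in blocks x₁,x₂,x₃ ∈ ℤ³,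
16·x(M⊗M)⁻¹xᵀ = Σᵢ 4xᵢM⁻¹xᵢᵀ + Σ_{i<j} 4(xᵢ−xⱼ)M⁻¹(xᵢ−xⱼ)ᵀ ≥ 9, and the
minimum 9 is attained. -/
theorem stmt9 :
    (∀ x : Fin 3 × Fin 3 → ℤ, x ≠ 0 →
      q99 (fun ij => (x ij : ℚ)) =
        (∑ i : Fin 3, q39 (blk9 x i)) +
          ∑ i : Fin 3, ∑ j : Fin 3, (if i < j then q39 (blk9 x i - blk9 x j) else 0) ∧
      (9 : ℚ) ≤ q99 (fun ij => (x ij : ℚ))) ∧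
    ∃ x : Fin 3 × Fin 3 → ℤ, x ≠ 0 ∧ q99 (fun ij => (x ij : ℚ)) = 9 := by
  constructor
  · intro x hx
    refine ⟨main_id x, ?_⟩
    rw [main_id x]
    set u : Fin 3 → ℤ := fun k => x (0, k) with hu
    set v : Fin 3 → ℤ := fun k => x (1, k) with hv
    set w : Fin 3 → ℤ := fun k => x (2, k) with hw
    have e0 : blk9 x 0 = fun j => ((u j : ℚ)) := rfl
    have e1 : blk9 x 1 = fun j => ((v j : ℚ)) := rfl
    have e2 : blk9 x 2 = fun j => ((w j : ℚ)) := rfl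
    have d01 : blk9 x 0 - blk9 x 1 = fun j => (((u - v) j : ℚ)) := by
      funext k; simp [blk9, hu, hv]
    have d02 : blk9 x 0 - blk9 x 2 = fun j => (((u - w) j : ℚ)) := by
      funext k; simp [blk9, hu, hw]
    have d12 : blk9 x 1 - blk9 x 2 = fun j => (((v - w) j : ℚ)) := by
      funext k; simp [blk9, hv, hw]
    have hsum : (∑ i : Fin 3, q39 (blk9 x i)) +
          ∑ i : Fin 3, ∑ j : Fin 3, (if i < j then q39 (blk9 x i - blk9 x j) else 0)
        = q39 (fun j => ((u j : ℚ))) + q39 (fun j => ((v j : ℚ))) + q39 (fun j => ((w j : ℚ)))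
          + q39 (fun j => (((u - v) j : ℚ))) + q39 (fun j => (((u - w) j : ℚ)))
          + q39 (fun j => (((v - w) j : ℚ))) := by
      rw [Fin.sum_univ_three]
      simp only [Fin.sum_univ_three, e0, e1, e2, d01, d02, d12]
      norm_num [show ((0:Fin 3) < 1) from by decide, show ((0:Fin 3) < 2) from by decide,
        show ((1:Fin 3) < 2) from by decide, show ¬((1:Fin 3) < 0) from by decide,
        show ¬((2:Fin 3) < 0) from by decide, show ¬((2:Fin 3) < 1) from by decide,
        show ¬((0:Fin 3) < 0) from by decide, show ¬((1:Fin 3) < 1) from by decide,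
        show ¬((2:Fin 3) < 2) from by decide]
      simp only [Pi.sub_def]
      ring
    rw [hsum]
    have hnz : ¬(u = 0 ∧ v = 0 ∧ w = 0) := by
      rintro ⟨h0, h1, h2⟩
      apply hx
      funext ij
      obtain ⟨i, j⟩ := ij
      fin_cases i
      · exact congrFun h0 j
      · exact congrFun h1 j
      · exact congrFun h2 j
    -- each of the six terms is nonneg
    have n1 := q39_nonneg (fun j => ((u j : ℚ)))
    have n2 := q39_nonneg (fun j => ((v j : ℚ)))
    have n3 := q39_nonneg (fun j => ((w j : ℚ)))
    have n4 := q39_nonneg (fun j => (((u - v) j : ℚ)))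
    have n5 := q39_nonneg (fun j => (((u - w) j : ℚ)))
    have n6 := q39_nonneg (fun j => (((v - w) j : ℚ)))
    by_cases h0 : u = 0
    · by_cases h1 : v = 0
      · have h2 : w ≠ 0 := by tauto
        have b3 := q39_lb w h2
        have b5 : u - w ≠ 0 := by rw [h0, zero_sub, neg_ne_zero]; exact h2
        have b6 : v - w ≠ 0 := by rw [h1, zero_sub, neg_ne_zero]; exact h2
        have := q39_lb _ b5; have := q39_lb _ b6
        linarith
      · by_cases h2 : w = 0
        · have b2 := q39_lb v h1
          have b4 : u - v ≠ 0 := by rw [h0, zero_sub, neg_ne_zero]; exact h1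
          have b6 : v - w ≠ 0 := by rw [h2]; simpa using h1
          have := q39_lb _ b4; have := q39_lb _ b6
          linarith
        · have b2 := q39_lb v h1
          have b3 := q39_lb w h2
          have b4 : u - v ≠ 0 := by rw [h0, zero_sub, neg_ne_zero]; exact h1
          have := q39_lb _ b4
          linarith
    · have b1 := q39_lb u h0
      by_cases h1 : v = 0
      · by_cases h2 : w = 0
        · have b4 : u - v ≠ 0 := by rw [h1]; simpa using h0
          have b5 : u - w ≠ 0 := by rw [h2]; simpa using h0
          have := q39_lb _ b4; have := q39_lb _ b5
          linarith
        · have b3 := q39_lb w h2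
          have b4 : u - v ≠ 0 := by rw [h1]; simpa using h0
          have := q39_lb _ b4
          linarith
      · have b2 := q39_lb v h1
        by_cases h2 : w = 0
        · have b5 : u - w ≠ 0 := by rw [h2]; simpa using h0
          have := q39_lb _ b5
          linarith
        · have b3 := q39_lb w h2
          linarith
  · refine ⟨fun ij => if ij = (0,0) then 1 else 0, ?_, ?_⟩
    · intro h
      have := congrFun h (0,0)
      simp at this
    · rw [main_id]
      simp only [Fin.sum_univ_three, q39_eq, Pi.sub_apply, blk9]
      norm_num [show ((0:Fin 3) < 1) from by decide, show ((0:Fin 3) < 2) from by decide,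
        show ((1:Fin 3) < 2) from by decide, show ¬((1:Fin 3) < 0) from by decide,
        show ¬((2:Fin 3) < 0) from by decide, show ¬((2:Fin 3) < 1) from by decide,
        show ¬((0:Fin 3) < 0) from by decide, show ¬((1:Fin 3) < 1) from by decide,
        show ¬((2:Fin 3) < 2) from by decide, Prod.ext_iff,
        show ¬((1:Fin 3) = 0) from by decide, show ¬((2:Fin 3) = 0) from by decide]
end

section
/- The 6×6 symmetric positive definite integer matrix C₀ with rows (3,0,1,0,0,0), (0,2,0,1,0,0), (1,0,2,1,0,0), (0,1,1,2,1,0), (0,0,0,1,2,1), (0,0,0,0,1,2) has determinant 7, and the minimum of the quadratic form x ↦ 7³·x(7²C₀)⁻¹xᵀ = 7·x C₀⁻¹ xᵀ over nonzero integer vectors x ∈ ℤ⁶ equals 4, which is strictly less than 6. -/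
/-- The explicit 6×6 integer matrix (a modified E₆ Gram matrix). -/
def C0 : Matrix (Fin 6) (Fin 6) ℤ :=
  !![3, 0, 1, 0, 0, 0;
     0, 2, 0, 1, 0, 0;
     1, 0, 2, 1, 0, 0;
     0, 1, 1, 2, 1, 0;
     0, 0, 0, 1, 2, 1;
     0, 0, 0, 0, 1, 2]

/-- Its rational version. -/
noncomputable def C0q : Matrix (Fin 6) (Fin 6) ℚ := C0.map Int.cast

/-- Integer vectors viewed as rational vectors. -/
def vq6 (x : Fin 6 → ℤ) : Fin 6 → ℚ := fun i => (x i : ℚ)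

/-- Rational version of the adjugate of C0. -/
def Aq : Matrix (Fin 6) (Fin 6) ℚ :=
  !![4, -3, -5, 6, -4, 2;
     -3, 11, 9, -15, 10, -5;
     -5, 9, 15, -18, 12, -6;
     6, -15, -18, 30, -20, 10;
     -4, 10, 12, -20, 18, -9;
     2, -5, -6, 10, -9, 8]

lemma cval2 {α : Type*} (a b c d e f : α) : ![a, b, c, d, e, f] 2 = c := rfl
lemma cval3 {α : Type*} (a b c d e f : α) : ![a, b, c, d, e, f] 3 = d := rfl
lemma cval4 {α : Type*} (a b c d e f : α) : ![a, b, c, d, e, f] 4 = e := rfl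
lemma cval5 {α : Type*} (a b c d e f : α) : ![a, b, c, d, e, f] 5 = f := rfl

lemma cval5' {α : Type*} (a b c d e f : α) :
    Matrix.vecCons a (fun i : Fin 5 => Matrix.vecCons b (fun i : Fin 4 => Matrix.vecCons c
      (fun i : Fin 3 => Matrix.vecCons d (fun i : Fin 2 => Matrix.vecCons e
      ((fun _ => f) : Fin 1 → α) i) i) i) i) (5 : Fin 6) = f := rfl

lemma hCA : C0q * Aq = (7 : ℚ) • (1 : Matrix (Fin 6) (Fin 6) ℚ) := by
  ext i j
  fin_cases i <;> fin_cases j <;>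
    norm_num [C0q, C0, Aq, Matrix.mul_apply, Fin.sum_univ_succ, Matrix.one_apply, Fin.ext_iff]

lemma hinv : C0q⁻¹ = (7 : ℚ)⁻¹ • Aq := by
  apply Matrix.inv_eq_right_inv
  rw [Matrix.mul_smul, hCA, smul_smul]
  norm_num

lemma hinv2 : ((7 : ℚ) ^ 2 • C0q)⁻¹ = ((7 : ℚ) ^ 3)⁻¹ • Aq := by
  apply Matrix.inv_eq_right_inv
  rw [Matrix.smul_mul, Matrix.mul_smul, hCA, smul_smul, smul_smul]
  norm_num

lemma dot_smul_form (c : ℚ) (M : Matrix (Fin 6) (Fin 6) ℚ) (v : Fin 6 → ℚ) :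
    dotProduct v ((c • M).mulVec v) = c * dotProduct v (M.mulVec v) := by
  rw [Matrix.smul_mulVec, dotProduct_smul, smul_eq_mul]

/-- The quadratic form x ↦ x (adj C₀) xᵀ over ℚ. -/
def Qf (a b c d e f : ℚ) : ℚ :=
  4*a^2 + 11*b^2 + 15*c^2 + 30*d^2 + 18*e^2 + 8*f^2 + (-6)*a*b + (-10)*a*c + 12*a*d
    + (-8)*a*e + 4*a*f + 18*b*c + (-30)*b*d + 20*b*e + (-10)*b*f + (-36)*c*d + 24*c*e
    + (-12)*c*f + (-40)*d*e + 20*d*f + (-18)*e*f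

/-- Integer version of the quadratic form. -/
def qZ (a b c d e f : ℤ) : ℤ :=
  4*a*a + 11*b*b + 15*c*c + 30*d*d + 18*e*e + 8*f*f - 6*a*b - 10*a*c + 12*a*d
    - 8*a*e + 4*a*f + 18*b*c - 30*b*d + 20*b*e - 10*b*f - 36*c*d + 24*c*e
    - 12*c*f - 40*d*e + 20*d*f - 18*e*f

lemma qZ_cast (a b c d e f : ℤ) :
    ((qZ a b c d e f : ℤ) : ℚ) = Qf (a : ℚ) (b : ℚ) (c : ℚ) (d : ℚ) (e : ℚ) (f : ℚ) := by
  simp only [qZ, Qf]; push_cast; ring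

lemma expandQ (x : Fin 6 → ℤ) :
    dotProduct (vq6 x) (Aq.mulVec (vq6 x)) =
      Qf (x 0 : ℚ) (x 1 : ℚ) (x 2 : ℚ) (x 3 : ℚ) (x 4 : ℚ) (x 5 : ℚ) := by
  simp [vq6, Aq, Qf, dotProduct, Matrix.mulVec, Fin.sum_univ_six, Matrix.cons_val',
    Matrix.cons_val_zero, Matrix.cons_val_one, Matrix.head_cons, Matrix.head_fin_const,
    Matrix.empty_val', Matrix.cons_val_fin_one, cval2, cval3, cval4, cval5, cval5']
  try ring

lemma sos0 (a b c d e f : ℚ) : 7 * a^2 ≤ 3 * Qf a b c d e f := by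
  have h : 3 * Qf a b c d e f - 7 * a^2 =
      (5/1)*(a + (-9/5)*b + (-3/1)*c + (18/5)*d + (-12/5)*e + (6/5)*f)^2
      + (84/5)*(b + (-3/4)*d + (1/2)*e + (-1/4)*f)^2
      + (63/4)*(d + (-2/3)*e + (1/3)*f)^2 + (14/1)*(e + (-1/2)*f)^2 + (21/2)*(f)^2 := by
    simp only [Qf]; ring
  nlinarith [sq_nonneg (a + (-9/5)*b + (-3/1)*c + (18/5)*d + (-12/5)*e + (6/5)*f),
    sq_nonneg (b + (-3/4)*d + (1/2)*e + (-1/4)*f), sq_nonneg (d + (-2/3)*e + (1/3)*f),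
    sq_nonneg (e + (-1/2)*f), sq_nonneg f, h]

lemma sos1 (a b c d e f : ℚ) : 7 * b^2 ≤ 2 * Qf a b c d e f := by
  have h : 2 * Qf a b c d e f - 7 * b^2 =
      (8/1)*(a + (-3/4)*b + (-5/4)*c + (3/2)*d + (-1/1)*e + (1/2)*f)^2
      + (21/2)*(b + c + (-2/1)*d + (4/3)*e + (-2/3)*f)^2
      + (7/1)*(c)^2 + (28/3)*(e + (-1/2)*f)^2 + (7/1)*(f)^2 := by
    simp only [Qf]; ring
  nlinarith [sq_nonneg (a + (-3/4)*b + (-5/4)*c + (3/2)*d + (-1/1)*e + (1/2)*f),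
    sq_nonneg (b + c + (-2/1)*d + (4/3)*e + (-2/3)*f), sq_nonneg c,
    sq_nonneg (e + (-1/2)*f), sq_nonneg f, h]

lemma sos2 (a b c d e f : ℚ) : 7 * c^2 ≤ 2 * Qf a b c d e f := by
  have h : 2 * Qf a b c d e f - 7 * c^2 =
      (8/1)*(a + (-3/4)*b + (-5/4)*c + (3/2)*d + (-1/1)*e + (1/2)*f)^2
      + (35/2)*(b + (3/5)*c + (-6/5)*d + (4/5)*e + (-2/5)*f)^2
      + (21/5)*(c + (-2/1)*d + (4/3)*e + (-2/3)*f)^2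
      + (28/3)*(e + (-1/2)*f)^2 + (7/1)*(f)^2 := by
    simp only [Qf]; ring
  nlinarith [sq_nonneg (a + (-3/4)*b + (-5/4)*c + (3/2)*d + (-1/1)*e + (1/2)*f),
    sq_nonneg (b + (3/5)*c + (-6/5)*d + (4/5)*e + (-2/5)*f),
    sq_nonneg (c + (-2/1)*d + (4/3)*e + (-2/3)*f), sq_nonneg (e + (-1/2)*f), sq_nonneg f, h]

lemma sos3 (a b c d e f : ℚ) : 7 * d^2 ≤ 2 * Qf a b c d e f := by
  have h : 2 * Qf a b c d e f - 7 * d^2 =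
      (8/1)*(a + (-3/4)*b + (-5/4)*c + (3/2)*d + (-1/1)*e + (1/2)*f)^2
      + (35/2)*(b + (3/5)*c + (-6/5)*d + (4/5)*e + (-2/5)*f)^2
      + (56/5)*(c + (-3/4)*d + (1/2)*e + (-1/4)*f)^2
      + (7/2)*(d + (-2/1)*e + f)^2 + (7/1)*(f)^2 := by
    simp only [Qf]; ring
  nlinarith [sq_nonneg (a + (-3/4)*b + (-5/4)*c + (3/2)*d + (-1/1)*e + (1/2)*f),
    sq_nonneg (b + (3/5)*c + (-6/5)*d + (4/5)*e + (-2/5)*f),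
    sq_nonneg (c + (-3/4)*d + (1/2)*e + (-1/4)*f), sq_nonneg (d + (-2/1)*e + f), sq_nonneg f, h]

lemma sos4 (a b c d e f : ℚ) : 7 * e^2 ≤ 2 * Qf a b c d e f := by
  have h : 2 * Qf a b c d e f - 7 * e^2 =
      (8/1)*(a + (-3/4)*b + (-5/4)*c + (3/2)*d + (-1/1)*e + (1/2)*f)^2
      + (35/2)*(b + (3/5)*c + (-6/5)*d + (4/5)*e + (-2/5)*f)^2
      + (56/5)*(c + (-3/4)*d + (1/2)*e + (-1/4)*f)^2
      + (21/2)*(d + (-2/3)*e + (1/3)*f)^2 + (7/3)*(e + (-2/1)*f)^2 := by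
    simp only [Qf]; ring
  nlinarith [sq_nonneg (a + (-3/4)*b + (-5/4)*c + (3/2)*d + (-1/1)*e + (1/2)*f),
    sq_nonneg (b + (3/5)*c + (-6/5)*d + (4/5)*e + (-2/5)*f),
    sq_nonneg (c + (-3/4)*d + (1/2)*e + (-1/4)*f), sq_nonneg (d + (-2/3)*e + (1/3)*f),
    sq_nonneg (e + (-2/1)*f), h]

lemma sos5 (a b c d e f : ℚ) : 7 * f^2 ≤ 2 * Qf a b c d e f := by
  have h : 2 * Qf a b c d e f - 7 * f^2 =
      (8/1)*(a + (-3/4)*b + (-5/4)*c + (3/2)*d + (-1/1)*e + (1/2)*f)^2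
      + (35/2)*(b + (3/5)*c + (-6/5)*d + (4/5)*e + (-2/5)*f)^2
      + (56/5)*(c + (-3/4)*d + (1/2)*e + (-1/4)*f)^2
      + (21/2)*(d + (-2/3)*e + (1/3)*f)^2 + (28/3)*(e + (-1/2)*f)^2 := by
    simp only [Qf]; ring
  nlinarith [sq_nonneg (a + (-3/4)*b + (-5/4)*c + (3/2)*d + (-1/1)*e + (1/2)*f),
    sq_nonneg (b + (3/5)*c + (-6/5)*d + (4/5)*e + (-2/5)*f),
    sq_nonneg (c + (-3/4)*d + (1/2)*e + (-1/4)*f), sq_nonneg (d + (-2/3)*e + (1/3)*f),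
    sq_nonneg (e + (-1/2)*f), h]

lemma small_check (a b c d e f : ℤ) (ha1 : -1 ≤ a) (ha2 : a ≤ 1) (hb1 : -1 ≤ b) (hb2 : b ≤ 1)
    (hc1 : -1 ≤ c) (hc2 : c ≤ 1) (hd1 : -1 ≤ d) (hd2 : d ≤ 1) (he1 : -1 ≤ e) (he2 : e ≤ 1)
    (hf1 : -1 ≤ f) (hf2 : f ≤ 1)
    (hn : ¬(a = 0 ∧ b = 0 ∧ c = 0 ∧ d = 0 ∧ e = 0 ∧ f = 0)) :
    4 ≤ qZ a b c d e f := by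
  simp only [qZ]
  interval_cases a <;> interval_cases b <;> interval_cases c <;> interval_cases d <;>
    interval_cases e <;> interval_cases f <;> omega

lemma sq_le_one_of_lt_two (a : ℤ) (h : (a : ℚ)^2 < 2) : -1 ≤ a ∧ a ≤ 1 := by
  have h' : a^2 < 2 := by exact_mod_cast (by push_cast; exact h : ((a^2 : ℤ) : ℚ) < 2)
  constructor <;> nlinarith [sq_nonneg (a - 1), sq_nonneg (a + 1)]

lemma int_min (a b c d e f : ℤ)
    (hn : ¬(a = 0 ∧ b = 0 ∧ c = 0 ∧ d = 0 ∧ e = 0 ∧ f = 0)) :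
    4 ≤ qZ a b c d e f := by
  by_contra h
  push_neg at h
  have hq : qZ a b c d e f ≤ 3 := by omega
  have hqQ : Qf (a : ℚ) (b : ℚ) (c : ℚ) (d : ℚ) (e : ℚ) (f : ℚ) ≤ 3 := by
    rw [← qZ_cast]; exact_mod_cast hq
  have Ha := sq_le_one_of_lt_two a (by nlinarith [sos0 (a:ℚ) b c d e f])
  have Hb := sq_le_one_of_lt_two b (by nlinarith [sos1 (a:ℚ) b c d e f])
  have Hc := sq_le_one_of_lt_two c (by nlinarith [sos2 (a:ℚ) b c d e f])
  have Hd := sq_le_one_of_lt_two d (by nlinarith [sos3 (a:ℚ) b c d e f])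
  have He := sq_le_one_of_lt_two e (by nlinarith [sos4 (a:ℚ) b c d e f])
  have Hf := sq_le_one_of_lt_two f (by nlinarith [sos5 (a:ℚ) b c d e f])
  have := small_check a b c d e f Ha.1 Ha.2 Hb.1 Hb.2 Hc.1 Hc.2 Hd.1 Hd.2 He.1 He.2 Hf.1 Hf.2 hn
  omega

lemma form_eq (x : Fin 6 → ℤ) :
    7 * dotProduct (vq6 x) (C0q⁻¹.mulVec (vq6 x)) =
      Qf (x 0 : ℚ) (x 1 : ℚ) (x 2 : ℚ) (x 3 : ℚ) (x 4 : ℚ) (x 5 : ℚ) := by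
  rw [hinv, dot_smul_form, expandQ]
  ring

set_option maxHeartbeats 2000000 in
set_option maxRecDepth 20000 in
/-- det C₀ = 7; the forms 7³·x(7²C₀)⁻¹xᵀ and 7·xC₀⁻¹xᵀ agree; the
minimum of 7·xC₀⁻¹xᵀ over nonzero integer vectors is 4 (attained), and 4 < 6. -/
theorem stmt10 :
    C0.det = 7 ∧
    (∀ x : Fin 6 → ℤ,
      (7 : ℚ) ^ 3 * dotProduct (vq6 x) (((7 : ℚ) ^ 2 • C0q)⁻¹.mulVec (vq6 x)) =
        7 * dotProduct (vq6 x) (C0q⁻¹.mulVec (vq6 x))) ∧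
    (∀ x : Fin 6 → ℤ, x ≠ 0 →
      (4 : ℚ) ≤ 7 * dotProduct (vq6 x) (C0q⁻¹.mulVec (vq6 x))) ∧
    (∃ x : Fin 6 → ℤ, x ≠ 0 ∧
      7 * dotProduct (vq6 x) (C0q⁻¹.mulVec (vq6 x)) = 4) ∧
    (4 : ℚ) < 6 := by
  refine ⟨?_, ?_, ?_, ?_, by norm_num⟩
  · simp [C0, Matrix.det_succ_row_zero, Fin.sum_univ_succ]
    rfl
  · intro x
    rw [hinv, hinv2, dot_smul_form, dot_smul_form]
    ring
  · intro x hx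
    rw [form_eq]
    have hn : ¬(x 0 = 0 ∧ x 1 = 0 ∧ x 2 = 0 ∧ x 3 = 0 ∧ x 4 = 0 ∧ x 5 = 0) := by
      intro h
      apply hx
      funext i
      fin_cases i <;> simp [h.1, h.2.1, h.2.2.1, h.2.2.2.1, h.2.2.2.2.1, h.2.2.2.2.2]
    have := int_min (x 0) (x 1) (x 2) (x 3) (x 4) (x 5) hn
    rw [← qZ_cast]
    exact_mod_cast this
  · refine ⟨![1, 0, 0, 0, 0, 0], ?_, ?_⟩
    · intro h
      have := congrFun h 0
      simp at this
    · rw [form_eq]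
      norm_num [Qf, cval2, cval3, cval4, cval5]
end

section
/- The 6×6 integer matrix C₀ with rows (3,0,1,0,0,0), (0,2,0,1,0,0), (1,0,2,1,0,0), (0,1,1,2,1,0), (0,0,0,1,2,1), (0,0,0,0,1,2) admits no factorization C₀ = Qᵀ Q with Q an integer matrix (of any number of rows). -/
open Matrix

/-- The explicit 6×6 integer matrix (a modified E₆ Gram matrix). -/
def C0' : Matrix (Fin 6) (Fin 6) ℤ :=
  !![3, 0, 1, 0, 0, 0;
     0, 2, 0, 1, 0, 0;
     1, 0, 2, 1, 0, 0;
     0, 1, 1, 2, 1, 0;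
     0, 0, 0, 1, 2, 1;
     0, 0, 0, 0, 1, 2]

/-- The adjugate of `C0'` (so `Dm * C0' = 7 • 1`). -/
def Dm : Matrix (Fin 6) (Fin 6) ℤ :=
  !![4, -3, -5, 6, -4, 2;
     -3, 11, 9, -15, 10, -5;
     -5, 9, 15, -18, 12, -6;
     6, -15, -18, 30, -20, 10;
     -4, 10, 12, -20, 18, -9;
     2, -5, -6, 10, -9, 8]

lemma DmC : Dm * C0' = (7:ℤ) • (1 : Matrix (Fin 6) (Fin 6) ℤ) := by decide

lemma Dm_symm : Dmᵀ = Dm := by decide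

def tv : Fin 3 → ℤ := ![-1, 0, 1]

set_option maxRecDepth 100000 in
lemma key' : ∀ f : Fin 6 → Fin 3,
    (∑ b, (∑ a, tv (f a) * Dm a b) * tv (f b)) ≤ 7 → tv (f 1) = 0 := by decide

lemma key (m : Fin 6 → ℤ) (hm : ∀ a, m a = -1 ∨ m a = 0 ∨ m a = 1)
    (hq : (∑ b, (∑ a, m a * Dm a b) * m b) ≤ 7) : m 1 = 0 := by
  have hch : ∀ a, ∃ c : Fin 3, m a = tv c := by
    intro a
    rcases hm a with h | h | h
    · exact ⟨0, by simp [tv, h]⟩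
    · exact ⟨1, by simp [tv, h]⟩
    · exact ⟨2, by simp [tv, h]⟩
  choose f hf using hch
  have hmf : m = fun a => tv (f a) := funext hf
  rw [hmf] at hq ⊢
  exact key' f hq

lemma sq_le_three {a : ℤ} (h : a * a ≤ 3) : a = -1 ∨ a = 0 ∨ a = 1 := by
  have h1 : -1 ≤ a := by nlinarith
  have h2 : a ≤ 1 := by nlinarith
  omega

/-- C₀ admits no factorization C₀ = QᵀQ with Q an integer matrix. -/
theorem stmt11 :
    ¬ ∃ (k : ℕ) (Q : Matrix (Fin k) (Fin 6) ℤ), Qᵀ * Q = C0' := by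
  rintro ⟨k, Q, h⟩
  -- Step A: every entry of Q is in {-1,0,1}
  have hentry : ∀ i j, Q i j = -1 ∨ Q i j = 0 ∨ Q i j = 1 := by
    intro i j
    apply sq_le_three
    have hdiag : (∑ t, Q t j * Q t j) = C0' j j := by
      have := congrFun (congrFun h j) j
      simpa [Matrix.mul_apply, Matrix.transpose_apply] using this
    have hC3 : ∀ j : Fin 6, C0' j j ≤ 3 := by decide
    have hle : (∑ t, Q t j * Q t j) ≤ 3 := by rw [hdiag]; exact hC3 j
    have hsingle : Q i j * Q i j ≤ ∑ t, Q t j * Q t j := by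
      apply Finset.single_le_sum (f := fun t => Q t j * Q t j)
      · intro t _; exact mul_self_nonneg _
      · exact Finset.mem_univ i
    linarith
  -- Step B: each row m of Q satisfies mᵀ Dm m ≤ 7
  set P : Matrix (Fin k) (Fin k) ℤ := Q * Dm * Qᵀ with hP
  have hPsym : Pᵀ = P := by
    rw [hP, Matrix.transpose_mul, Matrix.transpose_mul, Matrix.transpose_transpose,
      Dm_symm, Matrix.mul_assoc]
  have hPP : P * P = (7:ℤ) • P := by
    calc P * P = Q * Dm * (Qᵀ * Q) * Dm * Qᵀ := by
          simp only [hP, Matrix.mul_assoc]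
      _ = Q * (Dm * C0') * Dm * Qᵀ := by rw [h]; simp only [Matrix.mul_assoc]
      _ = (7:ℤ) • P := by
          rw [DmC]
          simp only [Matrix.mul_smul, Matrix.smul_mul, Matrix.mul_one, hP, Matrix.mul_assoc]
  have hProw : ∀ i : Fin k, P i i ≤ 7 := by
    intro i
    by_contra hcon
    push_neg at hcon
    -- N = 7•1 - P satisfies N*N = 7•N
    set N : Matrix (Fin k) (Fin k) ℤ := (7:ℤ) • (1 : Matrix (Fin k) (Fin k) ℤ) - P with hN
    have hNsym : Nᵀ = N := by
      rw [hN, Matrix.transpose_sub, Matrix.transpose_smul, Matrix.transpose_one, hPsym]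
    have hNN : N * N = (7:ℤ) • N := by
      rw [hN, Matrix.sub_mul, Matrix.mul_sub, Matrix.mul_sub, hPP]
      simp only [Matrix.smul_mul, Matrix.mul_smul, Matrix.one_mul, Matrix.mul_one]
      module
    have hpos : 0 ≤ (N * N) i i := by
      rw [Matrix.mul_apply]
      apply Finset.sum_nonneg
      intro t _
      have hti : N t i = N i t := by
        have := congrFun (congrFun hNsym t) i
        simpa [Matrix.transpose_apply] using this.symm
      rw [hti]
      exact mul_self_nonneg _
    rw [hNN] at hpos
    have hNii : N i i = 7 - P i i := by
      simp only [hN, Matrix.sub_apply, Matrix.smul_apply, Matrix.one_apply_eq, smul_eq_mul,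
        mul_one]
    simp only [Matrix.smul_apply, smul_eq_mul, hNii] at hpos
    linarith
  -- Step C: every row has zero entry at index 1
  have hrow1 : ∀ i : Fin k, Q i 1 = 0 := by
    intro i
    apply key (fun a => Q i a) (fun a => hentry i a)
    have : P i i = ∑ b, (∑ a, Q i a * Dm a b) * Q i b := by
      simp [hP, Matrix.mul_apply, Matrix.transpose_apply]
    rw [← this]
    exact hProw i
  -- Conclusion: (QᵀQ)₁₁ = 0 but C0'₁₁ = 2
  have h11 : (∑ t, Q t 1 * Q t 1) = C0' 1 1 := by
    have := congrFun (congrFun h 1) 1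
    simpa [Matrix.mul_apply, Matrix.transpose_apply] using this
  rw [Finset.sum_eq_zero (fun t _ => by rw [hrow1 t]; ring)] at h11
  have : C0' 1 1 = 2 := by decide
  omega
end

section
/- Let ζ be a primitive 5ⁿ-th root of unity. The elements 1, ζ + ζ⁻¹, ζ² + ζ⁻², …, ζ^{2·5^{n−1}−1} + ζ^{−(2·5^{n−1}−1)} form a ℤ-basis of the ring of integers of the maximal real subfield ℚ(ζ + ζ⁻¹) of ℚ(ζ). -/
set_option synthInstance.maxHeartbeats 1000000
set_option maxHeartbeats 1000000

open IntermediateField Polynomial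

/-- The maximal real subfield ℚ(ζ + ζ⁻¹) of ℚ(ζ), as an intermediate field of ℂ/ℚ. -/
noncomputable def realSub (ζ : ℂ) : IntermediateField ℚ ℂ :=
  IntermediateField.adjoin ℚ {ζ + ζ⁻¹}

namespace Stmt13Aux

/-- The fixed field of complex conjugation. -/
noncomputable def conjFixed : IntermediateField ℚ ℂ where
  carrier := {z | (starRingEnd ℂ) z = z}
  mul_mem' := by intro a b ha hb; simp only [Set.mem_setOf_eq, map_mul] at *; rw [ha, hb]
  one_mem' := by simp
  add_mem' := by intro a b ha hb; simp only [Set.mem_setOf_eq, map_add] at *; rw [ha, hb]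
  zero_mem' := by simp
  algebraMap_mem' := fun r => by simp [Complex.conj_ofReal]
  inv_mem' := by intro a ha; simp only [Set.mem_setOf_eq, map_inv₀] at *; rw [ha]

noncomputable def bb (ζ : ℂ) (i : ℕ) : ℂ := if i = 0 then 1 else ζ ^ i + (ζ ^ i)⁻¹

instance : Fact (Nat.Prime 5) := ⟨by norm_num⟩

section
variable {n : ℕ} {ζ : ℂ}

theorem zeta_ne_zero (hζ : IsPrimitiveRoot ζ (5 ^ n)) : ζ ≠ 0 :=
  hζ.ne_zero (by positivity)

theorem zeta_conj (hζ : IsPrimitiveRoot ζ (5 ^ n)) : (starRingEnd ℂ) ζ = ζ⁻¹ := by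
  have h1 : ‖ζ‖ = 1 := Complex.norm_eq_one_of_pow_eq_one hζ.pow_eq_one (by positivity)
  rw [Complex.inv_def, Complex.normSq_eq_norm_sq, h1]; simp

theorem zeta_inv_eq (hζ : IsPrimitiveRoot ζ (5 ^ n)) : ζ⁻¹ = ζ ^ (5 ^ n - 1) := by
  have h0 : (5:ℕ)^n ≠ 0 := by positivity
  field_simp [zeta_ne_zero hζ]
  rw [← pow_succ']
  rw [Nat.sub_add_cancel (Nat.pos_of_ne_zero h0)]
  exact hζ.pow_eq_one.symm

theorem zeta_int (hζ : IsPrimitiveRoot ζ (5 ^ n)) : IsIntegral ℤ ζ :=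
  hζ.isIntegral (by positivity)

theorem alpha_int (hζ : IsPrimitiveRoot ζ (5 ^ n)) : IsIntegral ℤ (ζ + ζ⁻¹) := by
  rw [zeta_inv_eq hζ]
  exact (zeta_int hζ).add ((zeta_int hζ).pow _)

theorem bb_int (hζ : IsPrimitiveRoot ζ (5 ^ n)) (i : ℕ) : IsIntegral ℤ (bb ζ i) := by
  rw [bb]
  split
  · exact isIntegral_one
  · rw [inv_pow ζ i |>.symm, zeta_inv_eq hζ]
    exact ((zeta_int hζ).pow _).add (((zeta_int hζ).pow _).pow _)

theorem alpha_mem_conjFixed (hζ : IsPrimitiveRoot ζ (5 ^ n)) : ζ + ζ⁻¹ ∈ conjFixed := by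
  show (starRingEnd ℂ) (ζ + ζ⁻¹) = ζ + ζ⁻¹
  rw [map_add, zeta_conj hζ, map_inv₀, zeta_conj hζ, inv_inv, add_comm]

theorem realSub_le_conjFixed (hζ : IsPrimitiveRoot ζ (5 ^ n)) : realSub ζ ≤ conjFixed := by
  rw [realSub, adjoin_le_iff]
  simpa using alpha_mem_conjFixed hζ

theorem zeta_not_mem_realSub (hn : 1 ≤ n) (hζ : IsPrimitiveRoot ζ (5 ^ n)) : ζ ∉ realSub ζ := by
  intro h
  have h2 : (starRingEnd ℂ) ζ = ζ := realSub_le_conjFixed hζ h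
  rw [zeta_conj hζ] at h2
  have hζ0 := zeta_ne_zero hζ
  have h3 : ζ ^ 2 = 1 := by field_simp at h2; exact h2.symm
  have hdvd := hζ.dvd_of_pow_eq_one 2 h3
  have h4 := Nat.le_of_dvd (by norm_num) hdvd
  have h5 : (5:ℕ) ≤ 5 ^ n := Nat.le_self_pow (by omega) 5
  omega

theorem alpha_mem_realSub (ζ : ℂ) : ζ + ζ⁻¹ ∈ realSub ζ :=
  IntermediateField.mem_adjoin_simple_self ℚ _

theorem realSub_le_adjoin_zeta (hζ : IsPrimitiveRoot ζ (5 ^ n)) : realSub ζ ≤ ℚ⟮ζ⟯ := by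
  rw [realSub, adjoin_le_iff]
  intro x hx
  simp only [Set.mem_singleton_iff] at hx
  subst hx
  exact add_mem (mem_adjoin_simple_self ℚ ζ) (inv_mem (mem_adjoin_simple_self ℚ ζ))

theorem zeta_pnat_prim (hζ : IsPrimitiveRoot ζ (5 ^ n)) :
    IsPrimitiveRoot ζ ((((5:ℕ+) ^ n : ℕ+)) : ℕ) := by simpa using hζ

theorem cyc_ext (hζ : IsPrimitiveRoot ζ (5 ^ n)) :
    IsCyclotomicExtension {5 ^ n} ℚ ℚ⟮ζ⟯ := by
  have hint : IsIntegral ℚ ζ := (zeta_int hζ).tower_top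
  have h1 := hζ.adjoin_isCyclotomicExtension ℚ
  have he : Algebra.adjoin ℚ ({ζ} : Set ℂ) = ℚ⟮ζ⟯.toSubalgebra :=
    (adjoin_simple_toSubalgebra_of_isAlgebraic hint.isAlgebraic).symm
  exact IsCyclotomicExtension.equiv _ _ _ (Subalgebra.equivOfEq _ _ he)

theorem finrank_Qzeta (hn : 1 ≤ n) (hζ : IsPrimitiveRoot ζ (5 ^ n)) :
    Module.finrank ℚ ℚ⟮ζ⟯ = 4 * 5 ^ (n - 1) := by
  have := cyc_ext hζ
  have h := IsCyclotomicExtension.finrank (n := 5^n) ℚ⟮ζ⟯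
    (Polynomial.cyclotomic.irreducible_rat (by positivity))
  rw [h]
  rw [Nat.totient_prime_pow (by norm_num) (by omega)]
  norm_num [mul_comm]

theorem minpoly_zeta_over_F (hn : 1 ≤ n) (hζ : IsPrimitiveRoot ζ (5 ^ n)) :
    (minpoly (realSub ζ) ζ).natDegree = 2 := by
  have hζ0 := zeta_ne_zero hζ
  have hnot := zeta_not_mem_realSub hn hζ
  have hintζQ : IsIntegral ℚ ζ := (zeta_int hζ).tower_top
  set F := realSub ζ
  set a : F := ⟨ζ + ζ⁻¹, IntermediateField.mem_adjoin_simple_self ℚ _⟩ with ha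
  set p : F[X] := X ^ 2 - (C a * X - C 1) with hp
  have hpmonic : p.Monic := by
    apply monic_X_pow_sub
    have h1 : degree (C a * X) < 2 := lt_of_le_of_lt (degree_C_mul_X_le a) (by norm_num)
    have h2 : degree (C (1:F)) < 2 := lt_of_le_of_lt degree_C_le (by norm_num)
    calc degree (C a * X - C 1) ≤ _ := degree_sub_le _ _
    _ < 2 := sup_lt_iff.mpr ⟨h1, h2⟩
  have hzint : IsIntegral F ζ := hintζQ.tower_top
  have haev : aeval ζ p = 0 := by
    have : (algebraMap F ℂ) a = ζ + ζ⁻¹ := rfl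
    simp only [hp, map_sub, map_add, map_mul, map_pow, aeval_X, aeval_C, aeval_one, this,
      map_one]
    field_simp
    ring
  have hdvd : minpoly F ζ ∣ p := minpoly.dvd F ζ haev
  have hdeg : p.natDegree = 2 := by rw [hp]; compute_degree!
  have hle2 : (minpoly F ζ).natDegree ≤ 2 := hdeg ▸ natDegree_le_of_dvd hdvd hpmonic.ne_zero
  have hpos : 0 < (minpoly F ζ).natDegree := minpoly.natDegree_pos hzint
  have hne1 : (minpoly F ζ).natDegree ≠ 1 := by
    intro h1
    have hdeg1 : (minpoly F ζ).degree = 1 := by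
      rw [degree_eq_natDegree (minpoly.ne_zero hzint), h1]; rfl
    rw [minpoly.degree_eq_one_iff] at hdeg1
    obtain ⟨y, hy⟩ := hdeg1
    exact hnot (hy ▸ y.2)
  omega

theorem finrank_realSub (hn : 1 ≤ n) (hζ : IsPrimitiveRoot ζ (5 ^ n)) :
    Module.finrank ℚ (realSub ζ) = 2 * 5 ^ (n - 1) := by
  have hintζQ : IsIntegral ℚ ζ := (zeta_int hζ).tower_top
  have hintαQ : IsIntegral ℚ (ζ + ζ⁻¹) := (alpha_int hζ).tower_top
  set F := realSub ζ
  have hzint : IsIntegral F ζ := hintζQ.tower_top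
  have h2 : Module.finrank F F⟮ζ⟯ = 2 := by
    rw [IntermediateField.adjoin.finrank hzint, minpoly_zeta_over_F hn hζ]
  have hres : IntermediateField.restrictScalars ℚ F⟮ζ⟯ = ℚ⟮ζ⟯ := by
    refine (IntermediateField.restrictScalars_adjoin_eq_sup (K := F) (S := {ζ})).trans ?_
    exact sup_eq_right.mpr (realSub_le_adjoin_zeta hζ)
  have hfd : FiniteDimensional ℚ F := by
    have : F = ℚ⟮ζ + ζ⁻¹⟯ := rfl
    rw [this]
    exact IntermediateField.adjoin.finiteDimensional hintαQ
  have htower := Module.finrank_mul_finrank ℚ F F⟮ζ⟯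
  have hrs : Module.finrank ℚ (IntermediateField.restrictScalars ℚ F⟮ζ⟯) =
      Module.finrank ℚ F⟮ζ⟯ := rfl
  rw [hres, finrank_Qzeta hn hζ] at hrs
  rw [← hrs, h2] at htower
  omega

theorem minpoly_alpha_natDegree (hn : 1 ≤ n) (hζ : IsPrimitiveRoot ζ (5 ^ n)) :
    (minpoly ℤ (ζ + ζ⁻¹)).natDegree = 2 * 5 ^ (n - 1) := by
  have hintαQ : IsIntegral ℚ (ζ + ζ⁻¹) := (alpha_int hζ).tower_top
  have hQ : (minpoly ℚ (ζ + ζ⁻¹)).natDegree = 2 * 5 ^ (n - 1) := by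
    rw [← IntermediateField.adjoin.finrank hintαQ]
    exact finrank_realSub hn hζ
  have heq := minpoly.isIntegrallyClosed_eq_field_fractions' ℚ (alpha_int hζ)
  rw [heq, (minpoly.monic (alpha_int hζ)).natDegree_map] at hQ
  exact hQ

theorem mem_adjoin_zeta_of_integral (hζ : IsPrimitiveRoot ζ (5 ^ n))
    {x : ℂ} (hxK : x ∈ ℚ⟮ζ⟯) (hxint : IsIntegral ℤ x) :
    x ∈ Algebra.adjoin ℤ ({ζ} : Set ℂ) := by
  haveI := cyc_ext hζ
  set K := ℚ⟮ζ⟯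
  set ζK : K := ⟨ζ, mem_adjoin_simple_self ℚ ζ⟩ with hζK
  have hζKprim : IsPrimitiveRoot ζK (5 ^ n) := by
    rw [← IsPrimitiveRoot.coe_submonoidClass_iff]
    exact hζ
  haveI := IsCyclotomicExtension.Rat.isIntegralClosure_adjoin_singleton_of_prime_pow
    (p := 5) (k := n) (K := K) hζKprim
  set xK : K := ⟨x, hxK⟩ with hxKdef
  have hxKint : IsIntegral ℤ xK := by
    have hinj : Function.Injective (algebraMap K ℂ) := Subtype.val_injective
    rw [← isIntegral_algebraMap_iff (A := K) (B := ℂ) hinj]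
    exact hxint
  obtain ⟨y, hy⟩ := (IsIntegralClosure.isIntegral_iff
    (A := Algebra.adjoin ℤ ({ζK} : Set K))).mp hxKint
  have hmem : xK ∈ Algebra.adjoin ℤ ({ζK} : Set K) := by
    rw [← hy]; exact y.2
  have hmap := AlgHom.map_adjoin (K.val.toRingHom.toIntAlgHom) ({ζK} : Set K)
  have hx2 : x ∈ (Algebra.adjoin ℤ ({ζK} : Set K)).map (K.val.toRingHom.toIntAlgHom) :=
    ⟨xK, hmem, rfl⟩
  rw [hmap] at hx2
  simpa using hx2

theorem adjoin_zeta_decomp (hζ0 : ζ ≠ 0) {x : ℂ} (hx : x ∈ Algebra.adjoin ℤ ({ζ} : Set ℂ)) :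
    ∃ a ∈ Algebra.adjoin ℤ ({ζ + ζ⁻¹} : Set ℂ), ∃ b ∈ Algebra.adjoin ℤ ({ζ + ζ⁻¹} : Set ℂ),
      x = a + ζ * b := by
  have hζsq : ζ * ζ = (ζ + ζ⁻¹) * ζ - 1 := by field_simp; ring
  have hα : (ζ + ζ⁻¹) ∈ Algebra.adjoin ℤ ({ζ + ζ⁻¹} : Set ℂ) := Algebra.subset_adjoin rfl
  induction hx using Algebra.adjoin_induction with
  | mem z hz =>
      rcases hz with rfl
      exact ⟨0, zero_mem _, 1, one_mem _, by simp⟩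
  | algebraMap r =>
      exact ⟨algebraMap ℤ ℂ r, Subalgebra.algebraMap_mem _ r, 0, zero_mem _, by simp⟩
  | add x y hx hy hx' hy' =>
      obtain ⟨a, ha, b, hb, rfl⟩ := hx'
      obtain ⟨c, hc, d, hd, rfl⟩ := hy'
      exact ⟨a + c, add_mem ha hc, b + d, add_mem hb hd, by ring⟩
  | mul x y hx hy hx' hy' =>
      obtain ⟨a, ha, b, hb, rfl⟩ := hx'
      obtain ⟨c, hc, d, hd, rfl⟩ := hy'
      refine ⟨a * c - b * d, sub_mem (mul_mem ha hc) (mul_mem hb hd),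
        a * d + b * c + (ζ + ζ⁻¹) * (b * d),
        add_mem (add_mem (mul_mem ha hd) (mul_mem hb hc)) (mul_mem hα (mul_mem hb hd)), ?_⟩
      calc (a + ζ * b) * (c + ζ * d)
          = a * c + ζ * (a * d + b * c) + (ζ * ζ) * (b * d) := by ring
        _ = a * c + ζ * (a * d + b * c) + ((ζ + ζ⁻¹) * ζ - 1) * (b * d) := by rw [hζsq]
        _ = (a * c - b * d) + ζ * (a * d + b * c + (ζ + ζ⁻¹) * (b * d)) := by ring

theorem bb_rec0 : (ζ + ζ⁻¹) * bb ζ 0 = bb ζ 1 := by simp [bb, pow_one]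

theorem bb_rec1 (hζ0 : ζ ≠ 0) : (ζ + ζ⁻¹) * bb ζ 1 = bb ζ 2 + 2 * bb ζ 0 := by
  simp only [bb, if_neg (by norm_num : (1:ℕ) ≠ 0), if_neg (by norm_num : (2:ℕ) ≠ 0), if_pos (rfl : (0:ℕ) = 0)]
  field_simp
  simp only [↓reduceIte]
  ring

theorem bb_rec (hζ0 : ζ ≠ 0) (j : ℕ) :
    (ζ + ζ⁻¹) * bb ζ (j + 2) = bb ζ (j + 3) + bb ζ (j + 1) := by
  simp only [bb, if_neg (by omega : j + 2 ≠ 0), if_neg (by omega : j + 3 ≠ 0),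
    if_neg (by omega : j + 1 ≠ 0)]
  field_simp
  ring

theorem mul_alpha_S (hζ0 : ζ ≠ 0) (i : ℕ) {x : ℂ}
    (hx : x ∈ Submodule.span ℤ (bb ζ '' Set.Iic i)) :
    (ζ + ζ⁻¹) * x ∈ Submodule.span ℤ (bb ζ '' Set.Iic (i + 1)) := by
  induction hx using Submodule.span_induction with
  | mem z hz =>
      obtain ⟨j, hj, rfl⟩ := hz
      rw [Set.mem_Iic] at hj
      have hmem : ∀ k ≤ i + 1, bb ζ k ∈ Submodule.span ℤ (bb ζ '' Set.Iic (i + 1)) :=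
        fun k hk => Submodule.subset_span ⟨k, hk, rfl⟩
      match j, hj with
      | 0, _ => rw [bb_rec0]; exact hmem 1 (by omega)
      | 1, hj =>
          rw [bb_rec1 hζ0]
          refine add_mem (hmem 2 (by omega)) ?_
          have h2 := Submodule.smul_mem _ (2:ℤ) (hmem 0 (by omega))
          simpa using h2
      | (k+2), hj =>
          rw [bb_rec hζ0 k]
          exact add_mem (hmem (k+3) (by omega)) (hmem (k+1) (by omega))
  | zero => simp
  | add a b _ _ ha hb => rw [mul_add]; exact add_mem ha hb
  | smul r a _ ha => rw [mul_smul_comm]; exact Submodule.smul_mem _ r ha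

theorem alpha_pow_mem_S (hζ0 : ζ ≠ 0) (i : ℕ) :
    (ζ + ζ⁻¹) ^ i ∈ Submodule.span ℤ (bb ζ '' Set.Iic i) := by
  induction i with
  | zero =>
      rw [pow_zero]
      exact Submodule.subset_span ⟨0, Set.mem_Iic.2 le_rfl, by simp [bb]⟩
  | succ i ih =>
      rw [pow_succ, mul_comm]
      exact mul_alpha_S hζ0 i ih

theorem mul_alpha_T (i : ℕ) {x : ℂ}
    (hx : x ∈ Submodule.span ℤ ((fun j => (ζ + ζ⁻¹) ^ j) '' Set.Iic i)) :
    (ζ + ζ⁻¹) * x ∈ Submodule.span ℤ ((fun j => (ζ + ζ⁻¹) ^ j) '' Set.Iic (i + 1)) := by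
  induction hx using Submodule.span_induction with
  | mem z hz =>
      obtain ⟨j, hj, rfl⟩ := hz
      rw [Set.mem_Iic] at hj
      have hps : (ζ + ζ⁻¹) * (ζ + ζ⁻¹) ^ j = (ζ + ζ⁻¹) ^ (j + 1) := (pow_succ' _ _).symm
      rw [hps]
      exact Submodule.subset_span ⟨j + 1, Set.mem_Iic.2 (by omega), rfl⟩
  | zero => simp
  | add a b _ _ ha hb => rw [mul_add]; exact add_mem ha hb
  | smul r a _ ha => rw [mul_smul_comm]; exact Submodule.smul_mem _ r ha

theorem T_mono {i i' : ℕ} (h : i ≤ i') :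
    Submodule.span ℤ ((fun j => (ζ + ζ⁻¹) ^ j) '' Set.Iic i) ≤
      Submodule.span ℤ ((fun j => (ζ + ζ⁻¹) ^ j) '' Set.Iic i') :=
  Submodule.span_mono (Set.image_mono (Set.Iic_subset_Iic.2 h))

theorem bb_mem_T (hζ0 : ζ ≠ 0) : ∀ i : ℕ,
    bb ζ i ∈ Submodule.span ℤ ((fun j => (ζ + ζ⁻¹) ^ j) '' Set.Iic i) := by
  intro i
  induction i using Nat.strong_induction_on with
  | _ i ih =>
    match i with
    | 0 => exact Submodule.subset_span ⟨0, Set.mem_Iic.2 le_rfl, by simp [bb]⟩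
    | 1 =>
        have hb1 : bb ζ 1 = (ζ + ζ⁻¹) ^ 1 := by simp [bb, pow_one]
        exact hb1 ▸ Submodule.subset_span ⟨1, Set.mem_Iic.2 le_rfl, rfl⟩
    | 2 =>
        have h2 : bb ζ 2 = (ζ + ζ⁻¹) * bb ζ 1 - 2 * bb ζ 0 := by
          rw [bb_rec1 hζ0]; ring
        rw [h2]
        refine sub_mem (mul_alpha_T 1 (ih 1 (by omega))) ?_
        have hs := Submodule.smul_mem
          (Submodule.span ℤ ((fun j => (ζ + ζ⁻¹) ^ j) '' Set.Iic 2)) (2:ℤ)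
          (T_mono (by omega) (ih 0 (by omega)))
        simpa using hs
    | (l+3) =>
        have h3 : bb ζ (l+3) = (ζ + ζ⁻¹) * bb ζ (l+2) - bb ζ (l+1) := by
          rw [bb_rec hζ0 l]; ring
        rw [h3]
        exact sub_mem (mul_alpha_T (l+2) (ih (l+2) (by omega)))
          (T_mono (by omega) (ih (l+1) (by omega)))

theorem adjoin_alpha_mem_realSub (ζ : ℂ) {x : ℂ}
    (hx : x ∈ Algebra.adjoin ℤ ({ζ + ζ⁻¹} : Set ℂ)) : x ∈ realSub ζ := by
  have hle : Algebra.adjoin ℤ ({ζ + ζ⁻¹} : Set ℂ) ≤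
      Subalgebra.restrictScalars ℤ (realSub ζ).toSubalgebra :=
    Algebra.adjoin_le (by simpa using alpha_mem_realSub ζ)
  exact hle hx

theorem mem_realSub_of_mem_spanT (ζ : ℂ) (i : ℕ) {x : ℂ}
    (hx : x ∈ Submodule.span ℤ ((fun j => (ζ + ζ⁻¹) ^ j) '' Set.Iic i)) :
    x ∈ realSub ζ := by
  have hle : Submodule.span ℤ ((fun j => (ζ + ζ⁻¹) ^ j) '' Set.Iic i) ≤
      Submodule.restrictScalars ℤ (Subalgebra.toSubmodule (realSub ζ).toSubalgebra) := by
    rw [Submodule.span_le]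
    rintro _ ⟨j, hj, rfl⟩
    exact pow_mem (alpha_mem_realSub ζ) j
  exact hle hx

theorem bb_mem_realSub (hζ0 : ζ ≠ 0) (i : ℕ) : bb ζ i ∈ realSub ζ :=
  mem_realSub_of_mem_spanT ζ i (bb_mem_T hζ0 i)

end

end Stmt13Aux

open Stmt13Aux in
/-- For ζ a primitive 5ⁿ-th root of unity, the elements
1, ζ+ζ⁻¹, ζ²+ζ⁻², …, ζ^{2·5^{n−1}−1}+ζ^{−(2·5^{n−1}−1)} form a ℤ-basis of the
ring of integers of ℚ(ζ+ζ⁻¹). -/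
theorem stmt13 (n : ℕ) (hn : 1 ≤ n) (ζ : ℂ) (hζ : IsPrimitiveRoot ζ (5 ^ n)) :
    ∃ B : Module.Basis (Fin (2 * 5 ^ (n - 1))) ℤ (integralClosure ℤ (realSub ζ)),
      ∀ i : Fin (2 * 5 ^ (n - 1)),
        ((B i : realSub ζ) : ℂ) =
          if (i : ℕ) = 0 then 1 else ζ ^ (i : ℕ) + (ζ ^ (i : ℕ))⁻¹ := by
  classical
  have hζ0 := zeta_ne_zero hζ
  set m := 2 * 5 ^ (n - 1) with hm
  set F := realSub ζ with hF
  have hintαQ : IsIntegral ℚ (ζ + ζ⁻¹) := (alpha_int hζ).tower_top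
  have hinjF : Function.Injective (algebraMap F ℂ) := Subtype.val_injective
  have hbbF : ∀ i : ℕ, bb ζ i ∈ F := bb_mem_realSub hζ0
  set v : Fin m → F := fun i => ⟨bb ζ (i : ℕ), hbbF i⟩ with hv
  have hbbint : ∀ i : Fin m, IsIntegral ℤ (v i) := by
    intro i
    rw [← isIntegral_algebraMap_iff (A := F) (B := ℂ) hinjF]
    exact bb_int hζ i
  set c : Fin m → (integralClosure ℤ F) := fun i => ⟨v i, hbbint i⟩ with hc
  -- α^k lies in the ℚ-span (in ℂ) of the bb's, for k < m
  have hpow_span : ∀ k : ℕ, k < m →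
      (ζ + ζ⁻¹) ^ k ∈ Submodule.span ℚ (Set.range (fun i : Fin m => bb ζ (i : ℕ))) := by
    intro k hk
    have h1 := alpha_pow_mem_S hζ0 k
    have h2 : Submodule.span ℤ (bb ζ '' Set.Iic k) ≤ Submodule.restrictScalars ℤ
        (Submodule.span ℚ (Set.range (fun i : Fin m => bb ζ (i : ℕ)))) := by
      rw [Submodule.span_le]
      rintro _ ⟨j, hj, rfl⟩
      rw [Set.mem_Iic] at hj
      exact Submodule.subset_span ⟨⟨j, by omega⟩, rfl⟩
    exact h2 h1
  -- ℚ-spanning of v in F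
  have hmapv : Submodule.map F.val.toLinearMap (Submodule.span ℚ (Set.range v)) =
      Submodule.span ℚ (Set.range (fun i : Fin m => bb ζ (i : ℕ))) := by
    rw [Submodule.map_span, ← Set.range_comp]
    rfl
  have hfin : FiniteDimensional ℚ F := IntermediateField.adjoin.finiteDimensional hintαQ
  have hrank : Module.finrank ℚ F = m := finrank_realSub hn hζ
  set PB : PowerBasis ℚ F := IntermediateField.adjoin.powerBasis hintαQ with hPB
  have hdim : PB.dim = m := by
    show (minpoly ℚ (ζ + ζ⁻¹)).natDegree = m
    rw [← IntermediateField.adjoin.finrank hintαQ]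
    exact hrank
  have hspanv : ⊤ ≤ Submodule.span ℚ (Set.range v) := by
    have hbasis_le : Set.range PB.basis ⊆ (Submodule.span ℚ (Set.range v) : Set F) := by
      rintro _ ⟨i, rfl⟩
      have hival : (algebraMap F ℂ) (PB.basis i) = (ζ + ζ⁻¹) ^ (i : ℕ) := by
        rw [PB.basis_eq_pow i, map_pow]
        congr 1
      have hik : (i : ℕ) < m := by rw [← hdim]; exact i.2
      have hmem := hpow_span (i : ℕ) hik
      rw [← hmapv] at hmem
      rw [← hival] at hmem
      obtain ⟨z, hz, hze⟩ := hmem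
      have : z = PB.basis i := hinjF hze
      rwa [this] at hz
    calc (⊤ : Submodule ℚ F) = Submodule.span ℚ (Set.range PB.basis) := PB.basis.span_eq.symm
    _ ≤ Submodule.span ℚ (Set.range v) := Submodule.span_le.mpr hbasis_le
  have hliQ : LinearIndependent ℚ v :=
    linearIndependent_of_top_le_span_of_card_eq_finrank hspanv (by simp [hrank])
  have hliZ : LinearIndependent ℤ v :=
    hliQ.restrict_scalars (by intro a b h; simpa using h)
  have hliC : LinearIndependent ℤ c := by
    refine LinearIndependent.of_comp ((integralClosure ℤ F).val.toLinearMap) ?_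
    have : ((integralClosure ℤ F).val.toLinearMap) ∘ c = v := rfl
    rwa [this]
  -- the ℤ-linear embedding of the integral closure into ℂ
  set ψ : (integralClosure ℤ F) →ₗ[ℤ] ℂ :=
    ((F.val.toRingHom.comp (integralClosure ℤ F).val.toRingHom).toIntAlgHom).toLinearMap with hψ
  have hψinj : Function.Injective ψ := by
    intro a b h
    exact Subtype.ext (Subtype.ext h)
  have hmapc : Submodule.map ψ (Submodule.span ℤ (Set.range c)) =
      Submodule.span ℤ (Set.range (fun i : Fin m => bb ζ (i : ℕ))) := by
    rw [Submodule.map_span, ← Set.range_comp]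
    rfl
  have hspanC : ⊤ ≤ Submodule.span ℤ (Set.range c) := by
    intro x _
    have hxF : ((x : F) : ℂ) ∈ F := (x : F).2
    have hxint : IsIntegral ℤ ((x : F) : ℂ) :=
      (isIntegral_algebraMap_iff (A := F) (B := ℂ) hinjF).mpr x.2
    have hxK : ((x : F) : ℂ) ∈ ℚ⟮ζ⟯ := realSub_le_adjoin_zeta hζ hxF
    have hadj := mem_adjoin_zeta_of_integral hζ hxK hxint
    obtain ⟨a, ha, b, hb, hab⟩ := adjoin_zeta_decomp hζ0 hadj
    have hb0 : b = 0 := by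
      by_contra hb0
      have haF : a ∈ F := adjoin_alpha_mem_realSub ζ ha
      have hbF : b ∈ F := adjoin_alpha_mem_realSub ζ hb
      have hζeq : ζ = (((x : F) : ℂ) - a) * b⁻¹ := by
        rw [hab]; field_simp; ring
      have hmemF : (((x : F) : ℂ) - a) * b⁻¹ ∈ F := mul_mem (sub_mem hxF haF) (inv_mem hbF)
      rw [← hζeq] at hmemF
      exact zeta_not_mem_realSub hn hζ hmemF
    rw [hb0, mul_zero, add_zero] at hab
    have hspan_pows := Submodule.span_range_natDegree_eq_adjoin
      (minpoly.monic (alpha_int hζ)) (minpoly.aeval ℤ (ζ + ζ⁻¹))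
    rw [minpoly_alpha_natDegree hn hζ] at hspan_pows
    have ha' : ((x : F) : ℂ) ∈ Submodule.span ℤ
        ((Finset.image ((ζ + ζ⁻¹) ^ ·) (Finset.range m) : Finset ℂ) : Set ℂ) := by
      rw [hspan_pows]
      rw [hab]
      exact ha
    have hfinal : ((x : F) : ℂ) ∈ Submodule.span ℤ
        (Set.range (fun i : Fin m => bb ζ (i : ℕ))) := by
      refine Submodule.span_le.mpr ?_ ha'
      intro y hy
      simp only [Finset.coe_image, Set.mem_image, Finset.mem_coe, Finset.mem_range] at hy
      obtain ⟨k, hk, rfl⟩ := hy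
      have h1 := alpha_pow_mem_S hζ0 k
      refine Submodule.span_le.mpr ?_ h1
      rintro _ ⟨j, hj, rfl⟩
      rw [Set.mem_Iic] at hj
      exact Submodule.subset_span ⟨⟨j, by omega⟩, rfl⟩
    rw [← hmapc] at hfinal
    obtain ⟨z, hz, hze⟩ := hfinal
    have hzx : z = x := hψinj hze
    rwa [hzx] at hz
  refine ⟨Module.Basis.mk hliC hspanC, fun i => ?_⟩
  rw [Module.Basis.mk_apply]
  rfl
end

section
/- Let A be a finite abelian group acting coprimely and faithfully on a finite abelian p-group P (i.e., gcd(|A|, p) = 1). Then A has a regular orbit on P: there exists x ∈ P with C_A(x) = 1. -/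
/-- `toZModLinearMap` sends composition to multiplication in `Module.End`. -/
lemma stmt15_toZModLinearMap_comp {n : ℕ} {M : Type*} [AddCommGroup M] [Module (ZMod n) M]
    (f g : M →+ M) :
    (f.comp g).toZModLinearMap n =
      (f.toZModLinearMap n : Module.End (ZMod n) M) * g.toZModLinearMap n := rfl

/-- `toZModLinearMap` sends the identity to one in `Module.End`. -/
lemma stmt15_toZModLinearMap_id {n : ℕ} {M : Type*} [AddCommGroup M] [Module (ZMod n) M] :
    (AddMonoidHom.id M).toZModLinearMap n = (1 : Module.End (ZMod n) M) := rfl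

/-- Maschke-type averaging: an invariant subspace has an invariant complement. -/
lemma stmt15_maschke {k : Type*} [Field k] {M : Type*} [AddCommGroup M] [Module k M]
    {G : Type*} [Group G] [Fintype G] (ρ : G →* Module.End k M)
    (hcard : (Fintype.card G : k) ≠ 0)
    (S : Submodule k M) (hS : ∀ g : G, ∀ x ∈ S, ρ g x ∈ S) :
    ∃ T : Submodule k M, IsCompl S T ∧ ∀ g : G, ∀ x ∈ T, ρ g x ∈ T := by
  obtain ⟨T0, hT0⟩ := S.exists_isCompl
  set q0 : Module.End k M := S.subtype ∘ₗ Submodule.linearProjOfIsCompl S T0 hT0 with hq0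
  have hq0mem : ∀ x : M, q0 x ∈ S := fun x => (Submodule.linearProjOfIsCompl S T0 hT0 x).2
  have hq0id : ∀ x ∈ S, q0 x = x := by
    intro x hx
    show (S.subtype (Submodule.linearProjOfIsCompl S T0 hT0 x)) = x
    have : Submodule.linearProjOfIsCompl S T0 hT0 (⟨x, hx⟩ : S) = ⟨x, hx⟩ :=
      Submodule.linearProjOfIsCompl_apply_left hT0 ⟨x, hx⟩
    simpa using congrArg (Subtype.val) this
  set c : k := (Fintype.card G : k) with hc
  set π : Module.End k M := c⁻¹ • ∑ g : G, ρ g * q0 * ρ g⁻¹ with hπ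
  have hπ_apply : ∀ x : M, π x = c⁻¹ • ∑ g : G, ρ g (q0 (ρ g⁻¹ x)) := by
    intro x
    rw [hπ, LinearMap.smul_apply, LinearMap.sum_apply]
    congr 1
  have hπmem : ∀ x : M, π x ∈ S := by
    intro x
    rw [hπ_apply]
    refine Submodule.smul_mem _ _ (Submodule.sum_mem _ fun g _ => ?_)
    exact hS g _ (hq0mem _)
  have hπid : ∀ x ∈ S, π x = x := by
    intro x hx
    rw [hπ_apply]
    have : ∀ g : G, ρ g (q0 (ρ g⁻¹ x)) = x := by
      intro g
      rw [hq0id _ (hS g⁻¹ x hx), ← Module.End.mul_apply, ← map_mul, mul_inv_cancel, map_one,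
        Module.End.one_apply]
    rw [Finset.sum_congr rfl fun g _ => this g, Finset.sum_const, Finset.card_univ,
      ← Nat.cast_smul_eq_nsmul k, smul_smul, inv_mul_cancel₀ hcard, one_smul]
  have hπcomm : ∀ h : G, π * ρ h = ρ h * π := by
    intro h
    rw [hπ, smul_mul_assoc, mul_smul_comm, Finset.sum_mul, Finset.mul_sum]
    congr 1
    rw [← Equiv.sum_comp (Equiv.mulLeft h) (fun g => ρ g * q0 * ρ g⁻¹ * ρ h)]
    refine Finset.sum_congr rfl fun g _ => ?_
    have h1 : (Equiv.mulLeft h) g = h * g := rfl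
    rw [h1, mul_inv_rev, map_mul, map_mul]
    have h2 : ρ g⁻¹ * ρ h⁻¹ * ρ h = ρ g⁻¹ := by
      rw [← map_mul, ← map_mul, inv_mul_cancel_right]
    calc ρ h * ρ g * q0 * (ρ g⁻¹ * ρ h⁻¹) * ρ h
        = ρ h * ρ g * q0 * (ρ g⁻¹ * ρ h⁻¹ * ρ h) := by rw [mul_assoc]
      _ = ρ h * ρ g * q0 * ρ g⁻¹ := by rw [h2]
      _ = ρ h * (ρ g * q0 * ρ g⁻¹) := by rw [mul_assoc, mul_assoc, mul_assoc]
  refine ⟨LinearMap.ker π, ⟨?_, ?_⟩, ?_⟩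
  · rw [disjoint_iff]
    rw [Submodule.eq_bot_iff]
    intro x hx
    have h1 : π x = x := hπid x hx.1
    have h2 : π x = 0 := LinearMap.mem_ker.mp hx.2
    rw [h1] at h2; exact h2
  · rw [codisjoint_iff, eq_top_iff]
    intro x _
    have hx1 : x - π x ∈ LinearMap.ker π := by
      rw [LinearMap.mem_ker, map_sub, hπid _ (hπmem x), sub_self]
    exact Submodule.mem_sup.mpr ⟨π x, hπmem x, x - π x, hx1, by abel⟩
  · intro g x hx
    rw [LinearMap.mem_ker] at hx ⊢
    rw [← Module.End.mul_apply, hπcomm g, Module.End.mul_apply, hx, map_zero]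

set_option maxHeartbeats 1000000 in
/-- A finite commuting group of linear automorphisms of a finite vector space in coprime
characteristic has a vector whose stabilizer acts trivially everywhere. -/
lemma stmt15_regular_vector {k : Type*} [Field k] {M : Type*} [AddCommGroup M] [Module k M]
    [Finite M] {G : Type*} [Group G] [Fintype G] (ρ : G →* Module.End k M)
    (hcomm : ∀ a b : G, a * b = b * a)
    (hcard : (Fintype.card G : k) ≠ 0) :
    ∃ x : M, ∀ g : G, ρ g x = x → ∀ y : M, ρ g y = y := by
  letI : Finite (Submodule k M) :=
    Finite.of_injective (fun W : Submodule k M => (W : Set M)) SetLike.coe_injective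
  have wf : WellFounded ((· < ·) : Submodule k M → Submodule k M → Prop) :=
    (Finite.to_wellFoundedLT (α := Submodule k M)).wf
  have key : ∀ W : Submodule k M, (∀ g : G, ∀ x ∈ W, ρ g x ∈ W) →
      ∃ x ∈ W, ∀ g : G, ρ g x = x → ∀ y ∈ W, ρ g y = y := by
    intro W
    induction W using WellFounded.induction wf with
    | _ W IH =>
    intro hW
    by_cases hbot : W = ⊥
    · refine ⟨0, W.zero_mem, fun g _ y hy => ?_⟩
      rw [hbot, Submodule.mem_bot] at hy
      rw [hy, map_zero]
    · have hne : {U : Submodule k M | U ≠ ⊥ ∧ U ≤ W ∧ ∀ g : G, ∀ x ∈ U, ρ g x ∈ U}.Nonempty :=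
        ⟨W, hbot, le_refl _, hW⟩
      obtain ⟨S, ⟨hSbot, hSW, hSinv⟩, hSmin⟩ := wf.has_min _ hne
      obtain ⟨T, hcompl, hTinv⟩ := stmt15_maschke ρ hcard S hSinv
      set T' : Submodule k M := T ⊓ W with hT'
      have hT'W : T' < W := by
        refine lt_of_le_of_ne inf_le_right fun hEq => ?_
        have hWT : W ≤ T := by rw [← hEq]; exact inf_le_left
        have : S ≤ S ⊓ T := le_inf (le_refl S) (le_trans hSW hWT)
        rw [hcompl.inf_eq_bot] at this
        exact hSbot (le_bot_iff.mp this)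
      have hT'inv : ∀ g : G, ∀ x ∈ T', ρ g x ∈ T' :=
        fun g x hx => ⟨hTinv g x hx.1, hW g x hx.2⟩
      obtain ⟨y, hyT', hy⟩ := IH T' hT'W hT'inv
      obtain ⟨s, hsS, hs0⟩ := S.ne_bot_iff.mp hSbot
      refine ⟨s + y, W.add_mem (hSW hsS) hyT'.2, fun g hg z hz => ?_⟩
      have h1 : ρ g s ∈ S := hSinv g s hsS
      have h2 : ρ g y ∈ T := hTinv g y hyT'.1
      have hdec : ρ g s + ρ g y = s + y := by rw [← map_add]; exact hg
      have hsub : ρ g s - s = y - ρ g y :=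
        sub_eq_sub_iff_add_eq_add.mpr (by rw [hdec, add_comm])
      have hms : ρ g s - s ∈ S := S.sub_mem h1 hsS
      have hmt : ρ g s - s ∈ T := by rw [hsub]; exact T.sub_mem hyT'.1 h2
      have hzero : ρ g s - s = 0 := by
        have := hcompl.inf_eq_bot
        have hmem : ρ g s - s ∈ S ⊓ T := ⟨hms, hmt⟩
        rw [this, Submodule.mem_bot] at hmem
        exact hmem
      have hgs : ρ g s = s := by rwa [sub_eq_zero] at hzero
      have hgy : ρ g y = y := by
        have : y - ρ g y = 0 := by rw [← hsub]; exact hzero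
        rw [sub_eq_zero] at this; exact this.symm
      -- g fixes all of S
      have hfixS : ∀ z ∈ S, ρ g z = z := by
        set F : Submodule k M := S ⊓ LinearMap.ker (ρ g - 1) with hF
        have hFfix : ∀ x, x ∈ F → ρ g x = x := by
          intro x hx
          have := LinearMap.mem_ker.mp hx.2
          rw [LinearMap.sub_apply, Module.End.one_apply, sub_eq_zero] at this
          exact this
        have hFinv : ∀ h' : G, ∀ x ∈ F, ρ h' x ∈ F := by
          intro h' x hx
          refine ⟨hSinv h' x hx.1, LinearMap.mem_ker.mpr ?_⟩
          have hcg : ρ g (ρ h' x) = ρ h' (ρ g x) := by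
            rw [← Module.End.mul_apply, ← Module.End.mul_apply, ← map_mul, ← map_mul,
              hcomm g h']
          rw [LinearMap.sub_apply, Module.End.one_apply, hcg, hFfix x hx, sub_self]
        have hsF : s ∈ F :=
          ⟨hsS, LinearMap.mem_ker.mpr (by
            rw [LinearMap.sub_apply, Module.End.one_apply, hgs, sub_self])⟩
        have hFbot : F ≠ ⊥ := fun hc => hs0 (by
          have := hsF; rw [hc, Submodule.mem_bot] at this; exact this)
        have hFW : F ≤ W := le_trans inf_le_left hSW
        have hFS : F = S := by
          have hle : F ≤ S := inf_le_left
          rcases hle.lt_or_eq with hlt | hEq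
          · exact absurd hlt (hSmin F ⟨hFbot, hFW, hFinv⟩)
          · exact hEq
        intro z hz
        exact hFfix z (hFS ▸ hz)
      -- g fixes all of T'
      have hfixT' : ∀ z ∈ T', ρ g z = z := hy g hgy
      -- decompose z over S ⊔ T'
      have hWsup : W ≤ S ⊔ T' := by
        have h3 : (S ⊔ T) ⊓ W = S ⊔ T ⊓ W := sup_inf_assoc_of_le T hSW
        rw [hcompl.sup_eq_top, top_inf_eq] at h3
        rw [h3]
      obtain ⟨u, hu, v, hv, huv⟩ := Submodule.mem_sup.mp (hWsup hz)
      rw [← huv, map_add, hfixS u hu, hfixT' v hv]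
  obtain ⟨x, _, hx⟩ := key ⊤ (fun g x _ => Submodule.mem_top)
  exact ⟨x, fun g hg y => hx g hg y Submodule.mem_top⟩

/-- A coprime automorphism of a (torsion abelian) p-group fixing all elements of order
dividing p is trivial. -/
lemma stmt15_omega_rigid {p : ℕ} (hp : p.Prime) {P : Type*} [CommGroup P] (a : MulAut P)
    (m : ℕ) (hm : a ^ m = 1) (hcop : Nat.Coprime m p)
    (hfix : ∀ x : P, x ^ p = 1 → a x = x)
    (htor : ∀ x : P, ∃ k, x ^ p ^ k = 1) : a = 1 := by
  have key : ∀ k : ℕ, ∀ x : P, x ^ p ^ k = 1 → a x = x := by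
    intro k
    induction k with
    | zero =>
      intro x hx
      rw [pow_zero, pow_one] at hx
      rw [hx, map_one]
    | succ k IH =>
      intro x hx
      have hxp : (x ^ p) ^ p ^ k = 1 := by
        rw [← pow_mul]
        rw [pow_succ'] at hx
        exact hx
      have h1 : a (x ^ p) = x ^ p := IH _ hxp
      set t : P := a x * x⁻¹ with ht
      have htp : t ^ p = 1 := by
        have haxp : (a x) ^ p = x ^ p := by rw [← map_pow, h1]
        rw [ht, mul_pow, inv_pow, haxp, mul_inv_cancel]
      have hat : a t = t := hfix t htp
      have hax : a x = x * t := by rw [ht, mul_comm x _, inv_mul_cancel_right]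
      have hatj : ∀ j : ℕ, (a ^ j) t = t := by
        intro j
        induction j with
        | zero => simp
        | succ j IHj => rw [pow_succ, MulAut.mul_apply, hat, IHj]
      have hpow : ∀ j : ℕ, (a ^ j) x = x * t ^ j := by
        intro j
        induction j with
        | zero => simp
        | succ j IHj =>
          rw [pow_succ, MulAut.mul_apply, hax, map_mul, IHj, hatj j, mul_assoc, ← pow_succ]
      have hxm : x * t ^ m = x := by
        have h5 := hpow m
        rw [hm, MulAut.one_apply] at h5
        exact h5.symm
      have htm : t ^ m = 1 := mul_left_cancel (a := x) (by rw [mul_one]; exact hxm)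
      have ht1 : t = 1 := by
        have d1 : orderOf t ∣ m := orderOf_dvd_of_pow_eq_one htm
        have d2 : orderOf t ∣ p := orderOf_dvd_of_pow_eq_one htp
        have d3 : orderOf t ∣ Nat.gcd m p := Nat.dvd_gcd d1 d2
        rw [Nat.Coprime.gcd_eq_one hcop] at d3
        exact orderOf_eq_one_iff.mp (Nat.dvd_one.mp d3)
      rw [hax, ht1, mul_one]
  ext x
  obtain ⟨k, hk⟩ := htor x
  simpa using key k x hk

set_option maxHeartbeats 1000000 in
/-- A finite abelian group A of automorphisms of a finite abelian
p-group P with |A| coprime to p has a regular orbit on P. -/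
theorem stmt15 (p : ℕ) [Fact p.Prime] (P : Type*) [CommGroup P] [Fintype P]
    (hp : IsPGroup p P) (A : Subgroup (MulAut P))
    (hab : ∀ a ∈ A, ∀ b ∈ A, a * b = b * a)
    (hA : Nat.Coprime (Nat.card A) p) :
    ∃ x : P, ∀ a ∈ A, a x = x → a = 1 := by
  classical
  have hpp : p.Prime := Fact.out
  obtain ⟨q, rfl⟩ : ∃ q, p = q + 1 := ⟨p - 1, (Nat.succ_pred_eq_of_pos hpp.pos).symm⟩
  set p := q + 1 with hpdef
  -- the subgroup of elements of order dividing p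
  let Ω : Subgroup P :=
    { carrier := {x : P | x ^ p = 1}
      one_mem' := one_pow p
      mul_mem' := by
        intro x y hx hy
        simp only [Set.mem_setOf_eq] at *
        rw [mul_pow, hx, hy, one_mul]
      inv_mem' := by
        intro x hx
        simp only [Set.mem_setOf_eq] at *
        rw [inv_pow, hx, inv_one] }
  have hΩmem : ∀ x : P, x ∈ Ω ↔ x ^ p = 1 := fun x => Iff.rfl
  letI : Module (ZMod p) (Additive ↥Ω) := AddCommGroup.zmodModule (by
    intro x
    apply Additive.toMul.injective
    rw [toMul_nsmul, toMul_zero]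
    apply Subtype.ext
    rw [SubmonoidClass.coe_pow, OneMemClass.coe_one]
    exact (Additive.toMul x).2)
  haveI : Finite (MulAut P) :=
    Finite.of_injective (fun f : MulAut P => (f : P → P))
      (fun f g h => by ext x; exact congrFun h x)
  letI : Fintype ↥A := Fintype.ofFinite _
  -- each element of A preserves Ω
  have hres : ∀ (a : MulAut P) (x : ↥Ω), ((a (x : P)) ∈ Ω) := by
    intro a x
    show (a (x : P)) ^ p = 1
    rw [← map_pow]
    have h : (x : P) ^ p = 1 := x.2
    rw [h, map_one]
  -- the representation of A on Additive Ω
  let ρfun : ↥A → Additive ↥Ω →+ Additive ↥Ω := fun a =>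
    { toFun := fun x =>
        Additive.ofMul
          (⟨(a : MulAut P) ((Additive.toMul x : ↥Ω) : P), hres a (Additive.toMul x)⟩ : ↥Ω)
      map_zero' := by
        apply Additive.toMul.injective
        apply Subtype.ext
        show (a : MulAut P) ((1 : ↥Ω) : P) = ((1 : ↥Ω) : P)
        rw [OneMemClass.coe_one, map_one]
      map_add' := by
        intro x y
        apply Additive.toMul.injective
        apply Subtype.ext
        show (a : MulAut P) ((Additive.toMul (x + y) : ↥Ω) : P) =
          (a : MulAut P) ((Additive.toMul x : ↥Ω) : P) *
            (a : MulAut P) ((Additive.toMul y : ↥Ω) : P)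
        rw [toMul_add, Subgroup.coe_mul, map_mul] }
  let ρ : ↥A →* Module.End (ZMod p) (Additive ↥Ω) :=
    { toFun := fun a => (ρfun a).toZModLinearMap p
      map_one' := LinearMap.ext fun x => rfl
      map_mul' := fun a b => LinearMap.ext fun x => rfl }
  have hρ_apply : ∀ (a : ↥A) (x : Additive ↥Ω), ρ a x = ρfun a x := fun a x => rfl
  have hval : ∀ (a : ↥A) (x : Additive ↥Ω),
      ((Additive.toMul (ρfun a x) : ↥Ω) : P) = (a : MulAut P) ((Additive.toMul x : ↥Ω) : P) :=
    fun a x => rfl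
  have hcomm : ∀ a b : ↥A, a * b = b * a := by
    intro a b
    apply Subtype.ext
    exact hab a a.2 b b.2
  have hcard : (Fintype.card ↥A : ZMod p) ≠ 0 := by
    haveI : NeZero p := ⟨hpp.ne_zero⟩
    rw [Ne, ZMod.natCast_eq_zero_iff]
    intro hdvd
    rw [← Nat.card_eq_fintype_card] at hdvd
    have h1 : p ∣ Nat.gcd (Nat.card ↥A) p := Nat.dvd_gcd hdvd dvd_rfl
    rw [Nat.Coprime.gcd_eq_one hA] at h1
    exact hpp.one_lt.ne' (Nat.dvd_one.mp h1)
  obtain ⟨x, hx⟩ := stmt15_regular_vector ρ hcomm hcard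
  refine ⟨((Additive.toMul x : ↥Ω) : P), ?_⟩
  intro a ha hax
  set g : ↥A := ⟨a, ha⟩ with hg
  have hgx : ρ g x = x := by
    apply Additive.toMul.injective
    apply Subtype.ext
    rw [hρ_apply g x, hval g x]
    exact hax
  have hfixΩ : ∀ y : P, y ^ p = 1 → a y = y := by
    intro y hy
    have h6 := hx g hgx (Additive.ofMul (⟨y, (hΩmem y).mpr hy⟩ : ↥Ω))
    have h7 : ((Additive.toMul (ρ g (Additive.ofMul (⟨y, (hΩmem y).mpr hy⟩ : ↥Ω))) : ↥Ω) : P) =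
        ((Additive.toMul (Additive.ofMul (⟨y, (hΩmem y).mpr hy⟩ : ↥Ω)) : ↥Ω) : P) := by
      rw [h6]
    rw [hρ_apply, hval] at h7
    exact h7
  have hm : a ^ Nat.card ↥A = 1 := by
    have h8 : g ^ Nat.card ↥A = 1 := pow_card_eq_one'
    have h9 := congrArg (Subtype.val) h8
    rw [SubgroupClass.coe_pow] at h9
    exact h9
  exact stmt15_omega_rigid hpp a (Nat.card ↥A) hm hA hfixΩ hp
end

section
/- Let P be a finite abelian p-group and A ≤ Aut(P) a p'-group acting indecomposably on P (P has no nontrivial A-invariant direct decomposition). Then P is homocyclic, i.e., isomorphic to a direct product of cyclic groups of the same order. -/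
open Finset Function

private lemma end_sum_apply {M : Type*} [AddCommGroup M] {ι : Type*} (s : Finset ι)
    (T : ι → AddMonoid.End M) (x : M) :
    (∑ i ∈ s, T i) x = ∑ i ∈ s, T i x := by
  induction s using Finset.cons_induction with
  | empty => simp
  | cons a s ha ih => rw [Finset.sum_cons, Finset.sum_cons, ← ih]; rfl

private lemma aux_range_antitone {M : Type*} [AddCommGroup M] (f : AddMonoid.End M) :
    Antitone (fun k => (f ^ k : AddMonoid.End M).range) := by
  apply antitone_nat_of_succ_le
  rintro k x ⟨y, rfl⟩
  exact ⟨f y, by rw [pow_succ]; rfl⟩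

private lemma aux_range_pow_succ {M : Type*} [AddCommGroup M] (f : AddMonoid.End M) (k : ℕ) :
    (f ^ (k + 1) : AddMonoid.End M).range = ((f ^ k : AddMonoid.End M).range).map f := by
  ext x
  show (∃ y, (f ^ (k + 1)) y = x) ↔ ∃ z, (∃ y, (f ^ k) y = z) ∧ f z = x
  constructor
  · rintro ⟨y, rfl⟩
    exact ⟨(f ^ k) y, ⟨y, rfl⟩, by rw [pow_succ']; rfl⟩
  · rintro ⟨z, ⟨y, rfl⟩, rfl⟩
    exact ⟨y, by rw [pow_succ']; rfl⟩

private lemma aux_fitting {M : Type*} [AddCommGroup M] [Finite M] (f : AddMonoid.End M) :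
    ∃ N, 1 ≤ N ∧ ∀ j, (f ^ (N + j) : AddMonoid.End M).range
      = (f ^ N : AddMonoid.End M).range := by
  haveI : Finite (AddSubgroup M) := Finite.of_injective _ SetLike.coe_injective
  obtain ⟨k, l, hne, heq⟩ :=
    Finite.exists_ne_map_eq_of_infinite (fun k => (f ^ k : AddMonoid.End M).range)
  have main : ∀ k l : ℕ, k < l →
      (f ^ k : AddMonoid.End M).range = (f ^ l : AddMonoid.End M).range →
      ∃ N, 1 ≤ N ∧ ∀ j, (f ^ (N + j) : AddMonoid.End M).range
        = (f ^ N : AddMonoid.End M).range := by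
    intro k l hkl hr
    have hstep : (f ^ (k + 1) : AddMonoid.End M).range
        = (f ^ k : AddMonoid.End M).range := by
      refine le_antisymm (aux_range_antitone f (Nat.le_succ k)) ?_
      rw [hr]; exact aux_range_antitone f hkl
    have hstable : ∀ j, (f ^ (k + j) : AddMonoid.End M).range
        = (f ^ k : AddMonoid.End M).range := by
      intro j
      induction j with
      | zero => rfl
      | succ j ih => rw [← Nat.add_assoc, aux_range_pow_succ, ih, ← aux_range_pow_succ, hstep]
    refine ⟨k + 1, Nat.le_add_left 1 k, fun j => ?_⟩
    rw [show k + 1 + j = k + (1 + j) by ring, hstable (1 + j), ← hstable 1]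
  rcases hne.lt_or_gt with h | h
  · exact main k l h heq
  · exact main l k h heq.symm

private lemma aux_coord (p m k : ℕ) (hp : 1 < p) (hm : 1 ≤ m) (hk : k = p ^ m)
    (a : ZMod k) (ha : p • a = 0) : ∃ c : ZMod k, a = p ^ (m - 1) • c := by
  subst hk
  haveI : NeZero (p ^ m) := ⟨pow_ne_zero _ (by omega)⟩
  have h1 : ((p * a.val : ℕ) : ZMod (p ^ m)) = 0 := by
    push_cast
    rw [ZMod.natCast_rightInverse a, ← nsmul_eq_mul]
    exact ha
  have h2 : p ^ m ∣ p * a.val := (ZMod.natCast_eq_zero_iff _ _).mp h1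
  have h3 : p ^ (m - 1) ∣ a.val := by
    have hm' : p * p ^ (m - 1) = p ^ m := by
      rw [← pow_succ']; congr 1; omega
    have h2' : p * p ^ (m - 1) ∣ p * a.val := by rw [hm']; exact h2
    exact Nat.dvd_of_mul_dvd_mul_left (show 0 < p by omega) h2'
  obtain ⟨d, hd⟩ := h3
  refine ⟨(d : ZMod (p ^ m)), ?_⟩
  calc a = ((a.val : ℕ) : ZMod (p ^ m)) := (ZMod.natCast_rightInverse a).symm
    _ = ((p ^ (m - 1) * d : ℕ) : ZMod (p ^ m)) := by rw [← hd]
    _ = p ^ (m - 1) • (d : ZMod (p ^ m)) := by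
        rw [nsmul_eq_mul]; push_cast; ring

/-- If a p'-group A of automorphisms acts indecomposably on a
finite abelian p-group P (no nontrivial A-invariant direct decomposition), then
P is homocyclic. -/
theorem stmt19 (p : ℕ) [Fact p.Prime] (P : Type*) [CommGroup P] [Fintype P]
    (hp : IsPGroup p P) (A : Subgroup (MulAut P))
    (hA : Nat.Coprime (Nat.card A) p)
    (hind : ¬ ∃ P₁ P₂ : Subgroup P, P₁ ≠ ⊥ ∧ P₂ ≠ ⊥ ∧
      (∀ a ∈ A, ∀ x ∈ P₁, a x ∈ P₁) ∧ (∀ a ∈ A, ∀ x ∈ P₂, a x ∈ P₂) ∧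
      P₁ ⊓ P₂ = ⊥ ∧ P₁ ⊔ P₂ = ⊤) :
    ∃ (k r : ℕ), Nonempty (P ≃* (Fin r → Multiplicative (ZMod (p ^ k)))) := by
  classical
  by_cases hP1 : Subsingleton P
  · haveI : Unique P := ⟨⟨1⟩, fun a => Subsingleton.elim a 1⟩
    exact ⟨0, 0, ⟨MulEquiv.mk' (Equiv.ofUnique P (Fin 0 → Multiplicative (ZMod (p ^ 0))))
      (fun x y => Subsingleton.elim _ _)⟩⟩
  rw [not_subsingleton_iff_nontrivial] at hP1
  have hpp : Nat.Prime p := Fact.out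
  obtain ⟨ι, hι, n, hn1, ⟨μ⟩⟩ := CommGroup.equiv_prod_multiplicative_zmod_of_finite P
  obtain ⟨nP, hcard⟩ := IsPGroup.iff_card.mp hp
  have hcardP : Nat.card P = ∏ i, n i := by
    rw [Nat.card_congr μ.toEquiv, Nat.card_pi]
    exact Finset.prod_congr rfl fun i _ => by
      rw [Nat.card_congr (Multiplicative.toAdd (α := ZMod (n i))), Nat.card_zmod]
  have hprod : ∏ i, n i = p ^ nP := by rw [← hcardP, hcard]
  have hppow : ∀ i, ∃ k, n i = p ^ k := fun i => by
    have hdvd : n i ∣ p ^ nP := hprod ▸ Finset.dvd_prod_of_mem n (Finset.mem_univ i)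
    obtain ⟨k, -, hk⟩ := (Nat.dvd_prime_pow hpp).mp hdvd
    exact ⟨k, hk⟩
  choose e hne using hppow
  have hnz : ∀ i, NeZero (n i) := fun i => ⟨by rw [hne i]; exact pow_ne_zero _ hpp.ne_zero⟩
  have he1 : ∀ i, 1 ≤ e i := fun i => by
    by_contra h
    have h0 : e i = 0 := by omega
    have := hn1 i
    rw [hne i, h0, pow_zero] at this
    omega
  haveI hiine : Nonempty ι := by
    by_contra h
    rw [not_nonempty_iff] at h
    exact absurd (Equiv.subsingleton μ.toEquiv) (not_subsingleton_iff_nontrivial.mpr hP1)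
  set eM := Finset.univ.sup' Finset.univ_nonempty e with heMdef
  obtain ⟨j0, -, hj0⟩ := Finset.exists_mem_eq_sup' Finset.univ_nonempty e
  rw [← heMdef] at hj0
  have heMax : ∀ i, e i ≤ eM := fun i => Finset.le_sup' e (Finset.mem_univ i)
  have heM1 : 1 ≤ eM := by rw [hj0]; exact he1 j0
  by_cases hhomo : ∀ i, e i = eM
  · refine ⟨eM, Fintype.card ι, ⟨μ.trans ?_⟩⟩
    have key : ∀ i, Multiplicative (ZMod (n i)) ≃* Multiplicative (ZMod (p ^ eM)) := fun i =>
      AddEquiv.toMultiplicative ((ZMod.ringEquivCongr (by rw [hne i, hhomo i])).toAddEquiv)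
    exact (MulEquiv.piCongrRight key).trans
      { Equiv.piCongrLeft' (fun _ => Multiplicative (ZMod (p ^ eM))) (Fintype.equivFin ι) with
        map_mul' := fun x y => rfl }
  push_neg at hhomo
  obtain ⟨i₀, hi₀⟩ := hhomo
  have hi₀lt : e i₀ < eM := lt_of_le_of_ne (heMax i₀) hi₀
  exfalso
  apply hind
  -- additive setup
  let ψ : Additive P ≃+ (∀ i, ZMod (n i)) :=
    (MulEquiv.toAdditive μ).trans
      (MulEquiv.toAdditiveLeft (MulEquiv.piMultiplicative (fun i => ZMod (n i))).symm)
  let π : AddMonoid.End (Additive P) :=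
    (ψ.symm.toAddMonoidHom.comp
      ((AddMonoidHom.mk' (fun y i => if e i = eM then y i else 0) (by
          intro y z; funext i; by_cases h : e i = eM <;> simp [h])).comp
        ψ.toAddMonoidHom))
  have hπ : ∀ x : Additive P, π x = ψ.symm (fun i => if e i = eM then ψ x i else 0) :=
    fun x => rfl
  have hπfix : ∀ x : Additive P, (∃ y, x = p ^ (eM - 1) • y) → π x = x := by
    rintro x ⟨y, rfl⟩
    rw [hπ]
    have h1 : (fun i => if e i = eM then ψ (p ^ (eM - 1) • y) i else 0)
        = p ^ (eM - 1) • ψ y := by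
      funext i
      rw [map_nsmul]
      by_cases h : e i = eM
      · simp [h]
      · simp only [h, if_false]
        haveI := hnz i
        have hz : ((p ^ (eM - 1) : ℕ) : ZMod (n i)) = 0 :=
          (ZMod.natCast_eq_zero_iff _ _).mpr
            (by rw [hne i]; exact pow_dvd_pow p (by have := heMax i; omega))
        show (0 : ZMod (n i)) = (p ^ (eM - 1) • ψ y) i
        rw [Pi.smul_apply, nsmul_eq_mul, hz, zero_mul]
    rw [h1, map_nsmul, ψ.symm_apply_apply]
  have hπker : ∀ x : Additive P, p • x = 0 → ∃ y, π x = p ^ (eM - 1) • y := by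
    intro x hx
    have hcoord : ∀ i, e i = eM → ∃ c : ZMod (n i), ψ x i = p ^ (eM - 1) • c := by
      intro i hi
      have hxi : p • (ψ x i) = 0 := by
        have h0 : ψ (p • x) = 0 := by rw [hx, map_zero]
        rw [map_nsmul] at h0
        have := congrFun h0 i
        rwa [Pi.smul_apply] at this
      obtain ⟨c, hc⟩ := aux_coord p eM (n i) hpp.one_lt heM1 (by rw [hne i, hi]) _ hxi
      exact ⟨c, hc⟩
    choose c hc using hcoord
    refine ⟨ψ.symm (fun i => if h : e i = eM then c i h else 0), ?_⟩
    rw [hπ, ← map_nsmul]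
    congr 1
    funext i
    rw [Pi.smul_apply]
    by_cases h : e i = eM
    · rw [if_pos h, dif_pos h, hc i h]
    · rw [if_neg h, dif_neg h, smul_zero]
  -- witnesses
  let w : Additive P := ψ.symm (Pi.single i₀ ((p ^ (e i₀ - 1) : ℕ) : ZMod (n i₀)))
  have hw0 : p • w = 0 := by
    rw [← map_nsmul]
    have h1 : p • (Pi.single i₀ ((p ^ (e i₀ - 1) : ℕ) : ZMod (n i₀)) : ∀ i, ZMod (n i))
        = (Pi.single i₀ (p • ((p ^ (e i₀ - 1) : ℕ) : ZMod (n i₀))) : ∀ i, ZMod (n i)) := by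
      funext j
      rcases eq_or_ne j i₀ with rfl | hj
      · rw [Pi.smul_apply, Pi.single_eq_same, Pi.single_eq_same]
      · rw [Pi.smul_apply, Pi.single_eq_of_ne hj, Pi.single_eq_of_ne hj, smul_zero]
    have h2 : p • ((p ^ (e i₀ - 1) : ℕ) : ZMod (n i₀)) = 0 := by
      rw [nsmul_eq_mul, ← Nat.cast_mul, ← pow_succ']
      rw [show e i₀ - 1 + 1 = e i₀ by have := he1 i₀; omega, ← hne i₀]
      exact ZMod.natCast_self (n i₀)
    rw [h1, h2, Pi.single_zero, map_zero]
  have hwnotin : ¬ ∃ y, w = p ^ (eM - 1) • y := by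
    rintro ⟨y, hy⟩
    have h1 : Pi.single i₀ ((p ^ (e i₀ - 1) : ℕ) : ZMod (n i₀)) = p ^ (eM - 1) • ψ y := by
      have h := congrArg ψ hy
      rwa [ψ.apply_symm_apply, map_nsmul] at h
    have h2 := congrFun h1 i₀
    rw [Pi.single_eq_same, Pi.smul_apply, nsmul_eq_mul] at h2
    haveI := hnz i₀
    have h3 : ((p ^ (eM - 1) : ℕ) : ZMod (n i₀)) = 0 :=
      (ZMod.natCast_eq_zero_iff _ _).mpr
        (by rw [hne i₀]; exact pow_dvd_pow p (by omega))
    rw [h3, zero_mul] at h2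
    have h4 : ¬ (n i₀ ∣ p ^ (e i₀ - 1)) := by
      rw [hne i₀, Nat.pow_dvd_pow_iff_le_right hpp.one_lt]
      have := he1 i₀; omega
    exact h4 ((ZMod.natCast_eq_zero_iff _ _).mp h2)
  let wm : Additive P := ψ.symm (Pi.single j0 ((p ^ (eM - 1) : ℕ) : ZMod (n j0)))
  have hwm_in : ∃ y, wm = p ^ (eM - 1) • y := by
    refine ⟨ψ.symm (Pi.single j0 (1 : ZMod (n j0))), ?_⟩
    rw [← map_nsmul]
    have hs : p ^ (eM - 1) • (Pi.single j0 (1 : ZMod (n j0)) : ∀ i, ZMod (n i))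
        = (Pi.single j0 (p ^ (eM - 1) • (1 : ZMod (n j0))) : ∀ i, ZMod (n i)) := by
      funext j
      rcases eq_or_ne j j0 with rfl | hj
      · rw [Pi.smul_apply, Pi.single_eq_same, Pi.single_eq_same]
      · rw [Pi.smul_apply, Pi.single_eq_of_ne hj, Pi.single_eq_of_ne hj, smul_zero]
    rw [hs]
    rw [nsmul_eq_mul, mul_one]
  have hwm_ne : wm ≠ 0 := by
    intro h
    have h1 : Pi.single j0 ((p ^ (eM - 1) : ℕ) : ZMod (n j0)) = (0 : ∀ i, ZMod (n i)) := by
      have := congrArg ψ h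
      rwa [ψ.apply_symm_apply, map_zero] at this
    have h2 := congrFun h1 j0
    rw [Pi.single_eq_same, Pi.zero_apply] at h2
    haveI := hnz j0
    have h4 : ¬ (n j0 ∣ p ^ (eM - 1)) := by
      rw [hne j0, hj0, Nat.pow_dvd_pow_iff_le_right hpp.one_lt]
      omega
    exact h4 ((ZMod.natCast_eq_zero_iff _ _).mp h2)
  -- the action of A
  haveI : Fintype A := Fintype.ofFinite A
  let τ : A → AddMonoid.End (Additive P) := fun a =>
    AddMonoidHom.mk' (fun x => Additive.ofMul ((a : MulAut P) x.toMul))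
      (fun x y => by simp [toMul_add, map_mul, ofMul_mul])
  have τ_apply : ∀ (a : A) (x : Additive P),
      τ a x = Additive.ofMul ((a : MulAut P) x.toMul) := fun a x => rfl
  have τ_mul : ∀ a b : A, τ (a * b) = τ a * τ b := fun a b => by
    refine AddMonoidHom.ext fun x => ?_
    show Additive.ofMul _ = (τ a) ((τ b) x)
    rw [τ_apply, τ_apply]
    show Additive.ofMul (((a * b : A) : MulAut P) x.toMul) = _
    rw [Subgroup.coe_mul, MulAut.mul_apply]
    rfl
  have τ_one : τ 1 = 1 := by
    refine AddMonoidHom.ext fun x => ?_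
    show Additive.ofMul _ = x
    rw [Subgroup.coe_one, MulAut.one_apply]
    rfl
  have τcancel : ∀ (a : A) (x : Additive P), τ a (τ a⁻¹ x) = x := fun a x => by
    have h : τ a * τ a⁻¹ = 1 := by rw [← τ_mul, mul_inv_cancel, τ_one]
    exact DFunLike.congr_fun h x
  -- invertibility of |A|
  have hcard1 : 1 < p ^ nP := by
    rw [← hcard]
    exact Finite.one_lt_card_iff_nontrivial.mpr hP1
  obtain ⟨u, -, hu⟩ := Nat.exists_mul_mod_eq_one_of_coprime (hA.pow_right nP) hcard1
  have hsm : ∀ x : Additive P, (Nat.card A * u) • x = x := by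
    intro x
    have hx : (p ^ nP) • x = 0 := by
      have h1 : x.toMul ^ (Nat.card P) = 1 := pow_card_eq_one'
      rw [hcard] at h1
      have h2 := congrArg Additive.ofMul h1
      rwa [ofMul_pow, ofMul_one] at h2
    calc (Nat.card A * u) • x
        = (p ^ nP * (Nat.card A * u / p ^ nP) + 1) • x := by
          congr 1
          conv_lhs => rw [← Nat.div_add_mod (Nat.card A * u) (p ^ nP)]
          rw [hu]
      _ = x := by
          rw [add_nsmul, one_nsmul, Nat.mul_comm, mul_nsmul' x _ (p ^ nP), hx, smul_zero,
            zero_add]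
  let F : AddMonoid.End (Additive P) := ∑ a : A, τ a * π * τ a⁻¹
  let f : AddMonoid.End (Additive P) := u • F
  have hcomm : ∀ b : A, τ b * f = f * τ b := by
    intro b
    have hterm : ∀ a : A, τ b * (τ a * π * τ a⁻¹) = (τ (b * a) * π * τ (b * a)⁻¹) * τ b := by
      intro a
      have hbb : τ (b * a)⁻¹ * τ b = τ a⁻¹ := by
        rw [← τ_mul]; congr 1; group
      calc τ b * (τ a * π * τ a⁻¹) = τ b * τ a * π * τ a⁻¹ := by
            simp only [mul_assoc]
        _ = τ (b * a) * π * τ a⁻¹ := by rw [τ_mul]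
        _ = τ (b * a) * π * (τ (b * a)⁻¹ * τ b) := by rw [hbb]
        _ = (τ (b * a) * π * τ (b * a)⁻¹) * τ b := by simp only [mul_assoc]
    have h1 : τ b * F = F * τ b := by
      show τ b * (∑ a : A, τ a * π * τ a⁻¹) = (∑ a : A, τ a * π * τ a⁻¹) * τ b
      rw [Finset.mul_sum, Finset.sum_mul]
      calc ∑ a : A, τ b * (τ a * π * τ a⁻¹)
          = ∑ a : A, (τ (b * a) * π * τ (b * a)⁻¹) * τ b :=
            Finset.sum_congr rfl (fun a _ => hterm a)
        _ = ∑ a : A, (τ a * π * τ a⁻¹) * τ b :=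
            Fintype.sum_bijective (fun a => b * a) (Group.mulLeft_bijective b) _ _
              (fun a => rfl)
    show τ b * (u • F) = (u • F) * τ b
    rw [mul_smul_comm, smul_mul_assoc, h1]
  have hFapply : ∀ x : Additive P, F x = ∑ a : A, τ a (π (τ a⁻¹ x)) := by
    intro x
    show (∑ a : A, τ a * π * τ a⁻¹) x = _
    rw [end_sum_apply]
    exact Finset.sum_congr rfl fun a _ => rfl
  have hfix : ∀ x : Additive P, (∃ y, x = p ^ (eM - 1) • y) → f x = x := by
    rintro x ⟨y, rfl⟩
    set x := p ^ (eM - 1) • y with hxdef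
    have hterm : ∀ a : A, τ a (π (τ a⁻¹ x)) = x := by
      intro a
      rw [hxdef, map_nsmul, hπfix _ ⟨τ a⁻¹ y, rfl⟩, ← map_nsmul, τcancel]
    have hF : F x = (Nat.card A) • x := by
      rw [hFapply, Finset.sum_congr rfl (fun a _ => hterm a), Finset.sum_const,
        Finset.card_univ, Nat.card_eq_fintype_card]
    calc f x = u • F x := rfl
      _ = u • ((Nat.card A) • x) := by rw [hF]
      _ = (Nat.card A * u) • x := by rw [Nat.mul_comm, mul_nsmul']
      _ = x := hsm x
  have hker : ∀ x : Additive P, p • x = 0 → ∃ y, f x = p ^ (eM - 1) • y := by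
    intro x hx
    have hterm : ∀ a : A, ∃ y, τ a (π (τ a⁻¹ x)) = p ^ (eM - 1) • y := by
      intro a
      have hx' : p • (τ a⁻¹ x) = 0 := by rw [← map_nsmul, hx, map_zero]
      obtain ⟨y, hy⟩ := hπker _ hx'
      exact ⟨τ a y, by rw [hy, map_nsmul]⟩
    choose Y hY using hterm
    refine ⟨u • ∑ a : A, Y a, ?_⟩
    calc f x = u • F x := rfl
      _ = u • ∑ a : A, τ a (π (τ a⁻¹ x)) := by rw [hFapply]
      _ = u • ∑ a : A, p ^ (eM - 1) • Y a := by
          rw [Finset.sum_congr rfl fun a _ => hY a]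
      _ = u • (p ^ (eM - 1) • ∑ a : A, Y a) := by rw [← Finset.smul_sum]
      _ = p ^ (eM - 1) • (u • ∑ a : A, Y a) := smul_comm _ _ _
  have hnotinj : ¬ Function.Injective (f : Additive P → Additive P) := by
    intro hinj
    obtain ⟨y, hy⟩ := (Finite.injective_iff_surjective.mp hinj) w
    have h1 : f (p • y) = 0 := by rw [map_nsmul, hy, hw0]
    have h2 : p • y = 0 := hinj (by rw [h1, map_zero])
    obtain ⟨v, hv⟩ := hker y h2
    exact hwnotin ⟨v, by rw [← hy, hv]⟩
  obtain ⟨x₁, x₂, hfx, hxx⟩ := Function.not_injective_iff.mp hnotinj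
  have hz0 : x₁ - x₂ ≠ 0 := sub_ne_zero.mpr hxx
  have hfz : f (x₁ - x₂) = 0 := by rw [map_sub, hfx, sub_self]
  obtain ⟨Nn, hNn1, hNstab⟩ := aux_fitting f
  have hfpow_fix : ∀ (k : ℕ) (x : Additive P),
      (∃ y, x = p ^ (eM - 1) • y) → (f ^ k) x = x := by
    intro k
    induction k with
    | zero => intro x _; rfl
    | succ k ih =>
        intro x hx
        have h1 : (f ^ (k + 1)) x = (f ^ k) (f x) := by rw [pow_succ]; rfl
        rw [h1, hfix x hx]
        exact ih x hx
  have hcommpow : ∀ (b : A) (k : ℕ) (x : Additive P),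
      (f ^ k) (τ b x) = τ b ((f ^ k) x) := by
    intro b k
    induction k with
    | zero => intro x; rfl
    | succ k ih =>
        intro x
        have h1 : (f ^ (k + 1)) (τ b x) = (f ^ k) (f (τ b x)) := by rw [pow_succ]; rfl
        have h2 : f (τ b x) = τ b (f x) := (DFunLike.congr_fun (hcomm b) x).symm
        have h3 : (f ^ (k + 1)) x = (f ^ k) (f x) := by rw [pow_succ]; rfl
        rw [h1, h2, ih (f x), h3]
  -- the two invariant subgroups
  let Q₁ : Subgroup P :=
    { carrier := {x : P | ∃ y, (f ^ Nn) y = Additive.ofMul x}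
      one_mem' := ⟨0, by rw [map_zero]; rfl⟩
      mul_mem' := by
        rintro a b ⟨ya, hya⟩ ⟨yb, hyb⟩
        exact ⟨ya + yb, by rw [map_add, hya, hyb]; rfl⟩
      inv_mem' := by
        rintro a ⟨y, hy⟩
        exact ⟨-y, by rw [map_neg, hy]; rfl⟩ }
  let Q₂ : Subgroup P :=
    { carrier := {x : P | (f ^ Nn) (Additive.ofMul x) = 0}
      one_mem' := by show (f ^ Nn) (Additive.ofMul 1) = 0; rw [ofMul_one, map_zero]
      mul_mem' := by
        intro a b ha hb
        show (f ^ Nn) (Additive.ofMul (a * b)) = 0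
        rw [ofMul_mul, map_add]
        rw [show (f ^ Nn) (Additive.ofMul a) = 0 from ha,
          show (f ^ Nn) (Additive.ofMul b) = 0 from hb, add_zero]
      inv_mem' := by
        intro a ha
        show (f ^ Nn) (Additive.ofMul a⁻¹) = 0
        rw [ofMul_inv, map_neg, show (f ^ Nn) (Additive.ofMul a) = 0 from ha, neg_zero] }
  refine ⟨Q₁, Q₂, ?_, ?_, ?_, ?_, ?_, ?_⟩
  · -- Q₁ ≠ ⊥
    intro hbot
    have hm : Additive.toMul wm ∈ Q₁ := ⟨wm, by rw [hfpow_fix Nn wm hwm_in]; rfl⟩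
    rw [hbot, Subgroup.mem_bot] at hm
    exact hwm_ne (toMul_eq_one.mp hm)
  · -- Q₂ ≠ ⊥
    intro hbot
    have hm : Additive.toMul (x₁ - x₂) ∈ Q₂ := by
      show (f ^ Nn) (Additive.ofMul (Additive.toMul (x₁ - x₂))) = 0
      obtain ⟨m, hm⟩ : ∃ m, Nn = m + 1 := ⟨Nn - 1, by omega⟩
      rw [show Additive.ofMul (Additive.toMul (x₁ - x₂)) = x₁ - x₂ from rfl, hm]
      show (f ^ (m + 1)) (x₁ - x₂) = 0
      rw [show (f ^ (m + 1)) (x₁ - x₂) = (f ^ m) (f (x₁ - x₂)) by rw [pow_succ]; rfl,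
        hfz, map_zero]
    rw [hbot, Subgroup.mem_bot] at hm
    exact hz0 (toMul_eq_one.mp hm)
  · -- invariance of Q₁
    rintro a ha x ⟨y, hy⟩
    refine ⟨τ ⟨a, ha⟩ y, ?_⟩
    rw [hcommpow ⟨a, ha⟩ Nn y, hy]
    rfl
  · -- invariance of Q₂
    intro a ha x hx
    show (f ^ Nn) (Additive.ofMul (a x)) = 0
    rw [show Additive.ofMul (a x) = τ ⟨a, ha⟩ (Additive.ofMul x) from rfl,
      hcommpow ⟨a, ha⟩ Nn, show (f ^ Nn) (Additive.ofMul x) = 0 from hx, map_zero]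
  · -- Q₁ ⊓ Q₂ = ⊥
    rw [eq_bot_iff]
    intro x hx
    rw [Subgroup.mem_inf] at hx
    obtain ⟨⟨y, hy⟩, h2⟩ := hx
    have h2' : (f ^ Nn) (Additive.ofMul x) = 0 := h2
    set R1 := (f ^ Nn : AddMonoid.End (Additive P)).range with hR1def
    let g : R1 → R1 := fun s => ⟨(f ^ Nn) s.1, ⟨s.1, rfl⟩⟩
    have hsur : Function.Surjective g := by
      rintro ⟨t, ht⟩
      have ht2 : t ∈ (f ^ (Nn + Nn) : AddMonoid.End (Additive P)).range := by
        rw [hNstab Nn]; exact ht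
      obtain ⟨v, hv⟩ := ht2
      refine ⟨⟨(f ^ Nn) v, ⟨v, rfl⟩⟩, ?_⟩
      apply Subtype.ext
      show (f ^ Nn) ((f ^ Nn) v) = t
      rw [← (id hv : (f ^ (Nn + Nn) : AddMonoid.End (Additive P)) v = t), show (f ^ (Nn + Nn) : AddMonoid.End (Additive P)) v
        = (f ^ Nn) ((f ^ Nn) v) by rw [pow_add]; rfl]
    have hinj : Function.Injective g := Finite.injective_iff_surjective.mpr hsur
    have e1 : (⟨Additive.ofMul x, ⟨y, hy⟩⟩ : R1) = ⟨0, zero_mem R1⟩ := by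
      apply hinj
      apply Subtype.ext
      show (f ^ Nn) (Additive.ofMul x) = (f ^ Nn) 0
      rw [h2', map_zero]
    have hx0 : Additive.ofMul x = 0 := congrArg Subtype.val e1
    rw [Subgroup.mem_bot]
    exact ofMul_eq_zero.mp hx0
  · -- Q₁ ⊔ Q₂ = ⊤
    rw [eq_top_iff]
    intro x _hx
    have h1 : (f ^ Nn) (Additive.ofMul x)
        ∈ (f ^ (Nn + Nn) : AddMonoid.End (Additive P)).range := by
      rw [hNstab Nn]; exact ⟨Additive.ofMul x, rfl⟩
    obtain ⟨v, hv⟩ := h1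
    rw [Subgroup.mem_sup]
    refine ⟨Additive.toMul ((f ^ Nn) v), ⟨v, rfl⟩,
      Additive.toMul (Additive.ofMul x - (f ^ Nn) v), ?_, ?_⟩
    · show (f ^ Nn) (Additive.ofMul (Additive.toMul (Additive.ofMul x - (f ^ Nn) v))) = 0
      rw [show Additive.ofMul (Additive.toMul (Additive.ofMul x - (f ^ Nn) v))
        = Additive.ofMul x - (f ^ Nn) v from rfl, map_sub]
      rw [show (f ^ Nn) ((f ^ Nn) v) = (f ^ (Nn + Nn) : AddMonoid.End (Additive P)) v by
        rw [pow_add]; rfl,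
        (id hv : (f ^ (Nn + Nn) : AddMonoid.End (Additive P)) v = (f ^ Nn) (Additive.ofMul x)), sub_self]
    · rw [← toMul_add, add_sub_cancel]
      rfl
end
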